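/- arXiv:2404.15716 — 4 statements merged into one kernel-verified Lean document; each statement's English description precedes it below -/
import Mathlib

section
/- Euler's pentagonal number theorem modulo 2: the infinite product ∏_{k≥1}(1 - q^k), viewed as a formal power series over ℤ/2ℤ, equals the sum over all integers m of q^{m(3m-1)/2}. -/
open PowerSeries
open scoped Classical

/-- `f t = ∏_{k≥1} (1 - q^{tk})` as a formal power series over `ZMod 2`. -/
noncomputable def f (t : ℕ) : PowerSeries (ZMod 2) :=
  PowerSeries.mk fun n =>
    PowerSeries.coeff (R := ZMod 2) n
      (∏ k ∈ Finset.range (n + 1), (1 - PowerSeries.X ^ (t * (k + 1))))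


namespace PentAux

def mx (S : Finset ℕ) : ℕ := if h : S.Nonempty then S.max' h else 0
def mn (S : Finset ℕ) : ℕ := if h : S.Nonempty then S.min' h else 0

lemma exists_sg (S : Finset ℕ) : ∃ i, mx S - i ∉ S ∨ mx S < i :=
  ⟨mx S + 1, Or.inr (Nat.lt_succ_self _)⟩

noncomputable def sg (S : Finset ℕ) : ℕ := Nat.find (exists_sg S)

variable {S : Finset ℕ}

lemma mx_mem (h : S.Nonempty) : mx S ∈ S := by rw [mx, dif_pos h]; exact S.max'_mem h
lemma le_mx (h : S.Nonempty) {x : ℕ} (hx : x ∈ S) : x ≤ mx S := by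
  rw [mx, dif_pos h]; exact S.le_max' x hx
lemma mn_mem (h : S.Nonempty) : mn S ∈ S := by rw [mn, dif_pos h]; exact S.min'_mem h
lemma mn_le (h : S.Nonempty) {x : ℕ} (hx : x ∈ S) : mn S ≤ x := by
  rw [mn, dif_pos h]; exact S.min'_le x hx
lemma mx_le (h : S.Nonempty) {b : ℕ} (hb : ∀ x ∈ S, x ≤ b) : mx S ≤ b := hb _ (mx_mem h)
lemma le_mn (h : S.Nonempty) {b : ℕ} (hb : ∀ x ∈ S, b ≤ x) : b ≤ mn S := hb _ (mn_mem h)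
lemma mn_pos (h : S.Nonempty) (h0 : 0 ∉ S) : 1 ≤ mn S := by
  rcases Nat.eq_zero_or_pos (mn S) with h1 | h1
  · exact absurd (h1 ▸ mn_mem h) h0
  · exact h1
lemma mn_le_mx (h : S.Nonempty) : mn S ≤ mx S := le_mx h (mn_mem h)

lemma sg_spec : mx S - sg S ∉ S ∨ mx S < sg S := Nat.find_spec (exists_sg S)

lemma sg_stair (hi : ∀ {i : ℕ}, i < sg S → mx S - i ∈ S ∧ i ≤ mx S) : True := trivial

lemma sg_min {i : ℕ} (hi : i < sg S) : mx S - i ∈ S ∧ i ≤ mx S := by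
  have := Nat.find_min (exists_sg S) hi
  push_neg at this
  exact this

lemma sg_pos (h : S.Nonempty) : 1 ≤ sg S := by
  by_contra hc
  have h1 : sg S = 0 := by omega
  have h2 := sg_spec (S := S)
  rw [h1] at h2
  rcases h2 with h2 | h2
  · simp only [Nat.sub_zero] at h2; exact h2 (mx_mem h)
  · omega

lemma sg_le_mx (h : S.Nonempty) (h0 : 0 ∉ S) : sg S ≤ mx S := by
  by_contra hc
  push_neg at hc
  have := (sg_min hc).1
  simp only [Nat.sub_self] at this
  exact h0 this

lemma sg_not_mem (h : S.Nonempty) (h0 : 0 ∉ S) : mx S - sg S ∉ S := by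
  rcases sg_spec (S := S) with h1 | h1
  · exact h1
  · exact absurd (sg_le_mx h h0) (by omega)

lemma stair_mem (h : S.Nonempty) (h0 : 0 ∉ S) {x : ℕ} (h1 : mx S - sg S < x) (h2 : x ≤ mx S) :
    x ∈ S := by
  have hsl := sg_le_mx h h0
  have h3 : mx S - x < sg S := by omega
  have h4 := (sg_min h3).1
  have h5 : mx S - (mx S - x) = x := by omega
  rwa [h5] at h4

lemma mn_Icc {a b : ℕ} (h1 : a ≤ b) : mn (Finset.Icc a b) = a := by
  have hne : (Finset.Icc a b).Nonempty := Finset.nonempty_Icc.mpr h1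
  refine le_antisymm (mn_le hne (Finset.mem_Icc.mpr ⟨le_refl a, h1⟩)) ?_
  exact le_mn hne fun x hx => (Finset.mem_Icc.mp hx).1

lemma mx_Icc {a b : ℕ} (h1 : a ≤ b) : mx (Finset.Icc a b) = b := by
  have hne : (Finset.Icc a b).Nonempty := Finset.nonempty_Icc.mpr h1
  refine le_antisymm (mx_le hne fun x hx => (Finset.mem_Icc.mp hx).2) ?_
  exact le_mx hne (Finset.mem_Icc.mpr ⟨h1, le_refl b⟩)

lemma sg_Icc {a b : ℕ} (h0 : 1 ≤ a) (h1 : a ≤ b) : sg (Finset.Icc a b) = b + 1 - a := by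
  rw [sg, Nat.find_eq_iff]
  constructor
  · left
    rw [mx_Icc h1, Finset.mem_Icc]
    omega
  · intro i hi
    rw [not_or, not_not, not_lt, mx_Icc h1, Finset.mem_Icc]
    omega



def upF (S : Finset ℕ) : Finset ℕ :=
  ((S \ Finset.Icc (mx S + 1 - mn S) (mx S)).erase (mn S)) ∪
    Finset.Icc (mx S + 2 - mn S) (mx S + 1)

noncomputable def downF (S : Finset ℕ) : Finset ℕ :=
  ((S \ Finset.Icc (mx S + 1 - sg S) (mx S)) ∪ Finset.Icc (mx S - sg S) (mx S - 1)) ∪ {sg S}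

lemma mem_upF {x : ℕ} :
    x ∈ upF S ↔ ((x ≠ mn S ∧ (x ∈ S ∧ ¬(mx S + 1 - mn S ≤ x ∧ x ≤ mx S))) ∨
      (mx S + 2 - mn S ≤ x ∧ x ≤ mx S + 1)) := by
  simp only [upF, Finset.mem_union, Finset.mem_erase, Finset.mem_sdiff, Finset.mem_Icc]

lemma mem_downF {x : ℕ} :
    x ∈ downF S ↔ (((x ∈ S ∧ ¬(mx S + 1 - sg S ≤ x ∧ x ≤ mx S)) ∨
      (mx S - sg S ≤ x ∧ x ≤ mx S - 1)) ∨ x = sg S) := by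
  simp only [downF, Finset.mem_union, Finset.mem_sdiff, Finset.mem_Icc, Finset.mem_singleton]

section Up

variable (h : S.Nonempty) (h0 : 0 ∉ S) (hs : mn S ≤ sg S) (hM : 2 * mn S ≤ mx S)
include h h0 hs hM

lemma up_top_mem : mx S + 1 ∈ upF S := by
  have hs1 := mn_pos h h0
  have hsM := mn_le_mx h
  rw [mem_upF]
  right
  omega

lemma up_nonempty : (upF S).Nonempty := ⟨mx S + 1, up_top_mem h h0 hs hM⟩

lemma up_zero : 0 ∉ upF S := by
  have hsM := mn_le_mx h
  rw [mem_upF]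
  rintro (⟨_, hmem, _⟩ | hr)
  · exact h0 hmem
  · omega

lemma up_mx : mx (upF S) = mx S + 1 := by
  refine le_antisymm (mx_le (up_nonempty h h0 hs hM) ?_) (le_mx (up_nonempty h h0 hs hM) (up_top_mem h h0 hs hM))
  intro x hx
  rw [mem_upF] at hx
  rcases hx with ⟨_, hmem, _⟩ | hr
  · have := le_mx h hmem; omega
  · omega

lemma up_mn : mn S + 1 ≤ mn (upF S) := by
  have hsM := mn_le_mx h
  have hmem := mn_mem (up_nonempty h h0 hs hM)
  rw [mem_upF] at hmem
  rcases hmem with ⟨hne', hmem, _⟩ | hr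
  · have := mn_le h hmem; omega
  · omega

lemma up_sg : sg (upF S) = mn S := by
  have hs1 := mn_pos h h0
  have hsM := mn_le_mx h
  rw [sg, Nat.find_eq_iff]
  rw [up_mx h h0 hs hM]
  constructor
  · left
    rw [mem_upF]
    rintro (⟨_, _, hno⟩ | hr)
    · exact hno ⟨by omega, by omega⟩
    · omega
  · intro i hi
    rw [not_or, not_not, not_lt]
    constructor
    · rw [mem_upF]; right; omega
    · omega

lemma up_ne : upF S ≠ S := by
  intro heq
  have h1 := up_top_mem h h0 hs hM
  rw [heq] at h1
  have := le_mx h h1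
  omega

lemma up_ne_exc : upF S ≠ Finset.Icc (mn S + 1) (2 * mn S) := by
  intro heq
  have h1 := up_top_mem h h0 hs hM
  rw [heq, Finset.mem_Icc] at h1
  omega

lemma up_sum : (upF S).sum id = S.sum id := by
  have hs1 := mn_pos h h0
  have hsM := mn_le_mx h
  have hσM := sg_le_mx h h0
  have hblock : ∀ x, mx S + 1 - mn S ≤ x → x ≤ mx S → x ∈ S := fun x hx1 hx2 =>
    stair_mem h h0 (by omega) hx2
  have hsub : Finset.Icc (mx S + 1 - mn S) (mx S) ⊆ S := by
    intro x hx
    rw [Finset.mem_Icc] at hx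
    exact hblock x hx.1 hx.2
  have hdisj : Disjoint ((S \ Finset.Icc (mx S + 1 - mn S) (mx S)).erase (mn S))
      (Finset.Icc (mx S + 2 - mn S) (mx S + 1)) := by
    rw [Finset.disjoint_left]
    intro x hx hx2
    rw [Finset.mem_erase, Finset.mem_sdiff, Finset.mem_Icc] at hx
    rw [Finset.mem_Icc] at hx2
    have := le_mx h hx.2.1
    omega
  have e1 : (upF S).sum id = ((S \ Finset.Icc (mx S + 1 - mn S) (mx S)).erase (mn S)).sum id
      + (Finset.Icc (mx S + 2 - mn S) (mx S + 1)).sum id := by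
    unfold upF
    exact Finset.sum_union hdisj
  have hsmem : mn S ∈ S \ Finset.Icc (mx S + 1 - mn S) (mx S) := by
    rw [Finset.mem_sdiff, Finset.mem_Icc]
    exact ⟨mn_mem h, by omega⟩
  have e2 : ((S \ Finset.Icc (mx S + 1 - mn S) (mx S)).erase (mn S)).sum id + mn S
      = (S \ Finset.Icc (mx S + 1 - mn S) (mx S)).sum id := Finset.sum_erase_add _ _ hsmem
  have e3 : (S \ Finset.Icc (mx S + 1 - mn S) (mx S)).sum id
      + (Finset.Icc (mx S + 1 - mn S) (mx S)).sum id = S.sum id := Finset.sum_sdiff hsub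
  have e4 : Finset.Icc (mx S + 2 - mn S) (mx S + 1)
      = Finset.image (fun x => x + 1) (Finset.Icc (mx S + 1 - mn S) (mx S)) := by
    rw [Finset.image_add_right_Icc]
    congr 1
    omega
  have e5 : (Finset.Icc (mx S + 2 - mn S) (mx S + 1)).sum id
      = (Finset.Icc (mx S + 1 - mn S) (mx S)).sum id + mn S := by
    rw [e4, Finset.sum_image (by intro x _ y _ hxy; simp only at hxy; omega)]
    simp only [id_eq]
    rw [Finset.sum_add_distrib, Finset.sum_const, Nat.card_Icc, smul_eq_mul, mul_one]
    omega
  omega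

end Up



section Down

variable (h : S.Nonempty) (h0 : 0 ∉ S) (hσ : sg S < mn S) (hM : 2 * sg S + 1 ≤ mx S)
include h h0 hσ hM

lemma down_sg_mem : sg S ∈ downF S := by rw [mem_downF]; right; rfl

lemma down_nonempty : (downF S).Nonempty := ⟨sg S, down_sg_mem h h0 hσ hM⟩

lemma down_zero : 0 ∉ downF S := by
  have hσ1 := sg_pos h
  have hσM := sg_le_mx h h0
  rw [mem_downF]
  rintro ((⟨hmem, _⟩ | hmid) | hr)
  · exact h0 hmem
  · omega
  · omega

lemma down_mx : mx (downF S) = mx S - 1 := by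
  have hσ1 := sg_pos h
  have hσM := sg_le_mx h h0
  refine le_antisymm (mx_le (down_nonempty h h0 hσ hM) ?_) ?_
  · intro x hx
    rw [mem_downF] at hx
    rcases hx with (⟨hmem, hno⟩ | hmid) | hr
    · have := le_mx h hmem; omega
    · omega
    · omega
  · refine le_mx (down_nonempty h h0 hσ hM) ?_
    rw [mem_downF]
    left; right
    omega

lemma down_mn : mn (downF S) = sg S := by
  have hσ1 := sg_pos h
  have hσM := sg_le_mx h h0
  refine le_antisymm (mn_le (down_nonempty h h0 hσ hM) (down_sg_mem h h0 hσ hM)) ?_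
  refine le_mn (down_nonempty h h0 hσ hM) ?_
  intro x hx
  rw [mem_downF] at hx
  rcases hx with (⟨hmem, _⟩ | hmid) | hr
  · have := mn_le h hmem; omega
  · omega
  · omega

lemma down_sg_ge : mn (downF S) ≤ sg (downF S) := by
  have hσ1 := sg_pos h
  have hσM := sg_le_mx h h0
  rw [down_mn h h0 hσ hM]
  show sg S ≤ Nat.find (exists_sg (downF S))
  rw [Nat.le_find_iff]
  intro i hi
  rw [not_or, not_not, not_lt, down_mx h h0 hσ hM]
  constructor
  · rw [mem_downF]; left; right; omega
  · omega

lemma down_ne : downF S ≠ S := by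
  intro heq
  have h1 := down_mn h h0 hσ hM
  rw [heq] at h1
  omega

lemma down_ne_exc : downF S ≠ Finset.Icc (sg S) (2 * sg S - 1) := by
  have hσ1 := sg_pos h
  intro heq
  have h1 := down_mx h h0 hσ hM
  rw [heq, mx_Icc (by omega)] at h1
  omega

lemma down_sum : (downF S).sum id = S.sum id := by
  have hσ1 := sg_pos h
  have hσM := sg_le_mx h h0
  have hs1 := mn_pos h h0
  have hnot := sg_not_mem h h0
  have hblock : ∀ x, mx S + 1 - sg S ≤ x → x ≤ mx S → x ∈ S := fun x hx1 hx2 =>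
    stair_mem h h0 (by omega) hx2
  have hsub : Finset.Icc (mx S + 1 - sg S) (mx S) ⊆ S := by
    intro x hx
    rw [Finset.mem_Icc] at hx
    exact hblock x hx.1 hx.2
  have hdisj2 : Disjoint (S \ Finset.Icc (mx S + 1 - sg S) (mx S))
      (Finset.Icc (mx S - sg S) (mx S - 1)) := by
    rw [Finset.disjoint_left]
    intro x hx hx2
    rw [Finset.mem_sdiff, Finset.mem_Icc] at hx
    rw [Finset.mem_Icc] at hx2
    have := le_mx h hx.1
    have hne' : x ≠ mx S - sg S := fun hh => hnot (hh ▸ hx.1)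
    omega
  have hdisj1 : Disjoint ((S \ Finset.Icc (mx S + 1 - sg S) (mx S)) ∪
      Finset.Icc (mx S - sg S) (mx S - 1)) ({sg S} : Finset ℕ) := by
    rw [Finset.disjoint_right]
    intro x hx hx2
    rw [Finset.mem_singleton] at hx
    subst hx
    rw [Finset.mem_union, Finset.mem_sdiff, Finset.mem_Icc] at hx2
    rcases hx2 with ⟨hmem, _⟩ | hmid
    · have := mn_le h hmem; omega
    · rw [Finset.mem_Icc] at hmid; omega
  have e1 : (downF S).sum id = (S \ Finset.Icc (mx S + 1 - sg S) (mx S)).sum id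
      + (Finset.Icc (mx S - sg S) (mx S - 1)).sum id + sg S := by
    unfold downF
    rw [Finset.sum_union hdisj1, Finset.sum_union hdisj2, Finset.sum_singleton]
    rfl
  have e3 : (S \ Finset.Icc (mx S + 1 - sg S) (mx S)).sum id
      + (Finset.Icc (mx S + 1 - sg S) (mx S)).sum id = S.sum id := Finset.sum_sdiff hsub
  have e4 : Finset.Icc (mx S + 1 - sg S) (mx S)
      = Finset.image (fun x => x + 1) (Finset.Icc (mx S - sg S) (mx S - 1)) := by
    rw [Finset.image_add_right_Icc]
    congr 1 <;> omega
  have e5 : (Finset.Icc (mx S + 1 - sg S) (mx S)).sum id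
      = (Finset.Icc (mx S - sg S) (mx S - 1)).sum id + sg S := by
    rw [e4, Finset.sum_image (by intro x _ y _ hxy; simp only at hxy; omega)]
    simp only [id_eq]
    rw [Finset.sum_add_distrib, Finset.sum_const, Nat.card_Icc, smul_eq_mul, mul_one]
    omega
  omega

end Down

section RoundTrip

lemma down_up (h : S.Nonempty) (h0 : 0 ∉ S) (hs : mn S ≤ sg S) (hM : 2 * mn S ≤ mx S) :
    downF (upF S) = S := by
  have hs1 := mn_pos h h0
  have hsM := mn_le_mx h
  have hσM := sg_le_mx h h0
  have hblock : ∀ x, mx S + 1 - mn S ≤ x → x ≤ mx S → x ∈ S := fun x hx1 hx2 =>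
    stair_mem h h0 (by omega) hx2
  have hmx := up_mx h h0 hs hM
  have hsg := up_sg h h0 hs hM
  apply Finset.ext
  intro x
  rw [mem_downF, hmx, hsg, mem_upF]
  constructor
  · rintro ((⟨(⟨hxne, hxS, hnI⟩ | ⟨hb1, hb2⟩), hnr⟩ | ⟨h1, h2⟩) | rfl)
    · exact hxS
    · exact absurd ⟨by omega, by omega⟩ hnr
    · exact hblock x (by omega) (by omega)
    · exact mn_mem h
  · intro hxS
    have hx1 := mn_le h hxS
    have hx2 := le_mx h hxS
    by_cases hxs : x = mn S
    · right; exact hxs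
    · left
      by_cases hxb : mx S + 1 - mn S ≤ x
      · right; omega
      · left
        exact ⟨Or.inl ⟨hxs, hxS, by omega⟩, by omega⟩

lemma up_down (h : S.Nonempty) (h0 : 0 ∉ S) (hσ : sg S < mn S) (hM : 2 * sg S + 1 ≤ mx S) :
    upF (downF S) = S := by
  have hσ1 := sg_pos h
  have hσM := sg_le_mx h h0
  have hs1 := mn_pos h h0
  have hnot := sg_not_mem h h0
  have hblock : ∀ x, mx S + 1 - sg S ≤ x → x ≤ mx S → x ∈ S := fun x hx1 hx2 =>
    stair_mem h h0 (by omega) hx2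
  have hmx := down_mx h h0 hσ hM
  have hmn := down_mn h h0 hσ hM
  apply Finset.ext
  intro x
  rw [mem_upF, hmx, hmn, mem_downF]
  constructor
  · rintro (⟨hxne, ((⟨hxS, hno⟩ | ⟨hb1, hb2⟩) | rfl), hnI⟩ | ⟨h1, h2⟩)
    · exact hxS
    · exact absurd ⟨by omega, by omega⟩ hnI
    · exact absurd rfl hxne
    · exact hblock x (by omega) (by omega)
  · intro hxS
    have hx1 := mn_le h hxS
    have hx2 := le_mx h hxS
    have hxne : x ≠ mx S - sg S := fun hh => hnot (hh ▸ hxS)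
    by_cases hxb : mx S + 1 - sg S ≤ x
    · right; omega
    · left
      exact ⟨by omega, Or.inl (Or.inl ⟨hxS, by omega⟩), by omega⟩

end RoundTrip

section Keys

lemma key1 (h : S.Nonempty) (h0 : 0 ∉ S) (hs : mn S ≤ sg S)
    (hexc : S ≠ Finset.Icc (mn S) (2 * mn S - 1)) : 2 * mn S ≤ mx S := by
  by_contra hc
  push_neg at hc
  have hs1 := mn_pos h h0
  have hsM := mn_le_mx h
  have hσM := sg_le_mx h h0
  have hσ1 := sg_pos h
  have hall : ∀ y, mn S ≤ y → y ≤ mx S → y ∈ S := fun y h1 h2 =>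
    stair_mem h h0 (by omega) h2
  have hnot := sg_not_mem h h0
  have h1 : mx S - sg S < mn S := by
    by_contra hc2
    push_neg at hc2
    exact hnot (hall _ hc2 (by omega))
  have h2 : mx S - (sg S - 1) ∈ S := (sg_min (by omega)).1
  have h3 := mn_le h h2
  apply hexc
  apply Finset.ext
  intro x
  rw [Finset.mem_Icc]
  constructor
  · intro hx
    exact ⟨mn_le h hx, by have := le_mx h hx; omega⟩
  · rintro ⟨hx1, hx2⟩
    exact hall x hx1 (by omega)

lemma key2 (h : S.Nonempty) (h0 : 0 ∉ S) (hσ : sg S < mn S)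
    (hexc : S ≠ Finset.Icc (sg S + 1) (2 * sg S)) : 2 * sg S + 1 ≤ mx S := by
  by_contra hc
  push_neg at hc
  have hs1 := mn_pos h h0
  have hsM := mn_le_mx h
  have hσM := sg_le_mx h h0
  have hσ1 := sg_pos h
  have hall : ∀ y, mx S + 1 - sg S ≤ y → y ≤ mx S → y ∈ S := fun y h1 h2 =>
    stair_mem h h0 (by omega) h2
  have hlow : ∀ x ∈ S, mx S + 1 - sg S ≤ x := by
    intro x hx
    have := mn_le h hx
    have := le_mx h hx
    omega
  have h2 : mx S + 1 - sg S ∈ S := hall _ (le_refl _) (by omega)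
  have h3 := mn_le h h2
  have h4 := hlow _ (mn_mem h)
  apply hexc
  apply Finset.ext
  intro x
  rw [Finset.mem_Icc]
  constructor
  · intro hx
    have := hlow x hx
    have := le_mx h hx
    omega
  · rintro ⟨hx1, hx2⟩
    exact hall x (by omega) (by omega)

end Keys



noncomputable def Phi (S : Finset ℕ) : Finset ℕ :=
  if mn S ≤ sg S then upF S else downF S

lemma Phi_up {S : Finset ℕ} (hbr : mn S ≤ sg S) : Phi S = upF S := if_pos hbr
lemma Phi_down {S : Finset ℕ} (hbr : ¬ mn S ≤ sg S) : Phi S = downF S := if_neg hbr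

def Dn (n : ℕ) : Finset (Finset ℕ) :=
  (Finset.range (n + 2)).powerset.filter (fun S => S.sum id = n ∧ 0 ∉ S)

lemma mem_Dn {n : ℕ} {S : Finset ℕ} :
    S ∈ Dn n ↔ S ⊆ Finset.range (n + 2) ∧ S.sum id = n ∧ 0 ∉ S := by
  simp [Dn, Finset.mem_filter, Finset.mem_powerset]

lemma mem_le_sum {T : Finset ℕ} {x : ℕ} (hx : x ∈ T) : x ≤ T.sum id :=
  Finset.single_le_sum (f := id) (fun i _ => Nat.zero_le i) hx

lemma pent_inj {a b : ℤ} (hab : a * (3 * a - 1) = b * (3 * b - 1)) : a = b := by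
  have h2 : (a - b) * (3 * (a + b) - 1) = 0 := by linear_combination hab
  rcases mul_eq_zero.mp h2 with h3 | h3
  · omega
  · exfalso; omega

lemma invol (n : ℕ) (hn : 1 ≤ n) (G : Finset (Finset ℕ))
    (hG : ∀ S, S ∈ G ↔ (S ∈ Dn n ∧ ∀ a b : ℕ, 1 ≤ a → a ≤ b →
      (b = 2 * a - 1 ∨ b = 2 * a - 2) → S ≠ Finset.Icc a b)) :
    ∑ S ∈ G, (1 : ZMod 2) = 0 := by
  have hfacts : ∀ S ∈ G, S.Nonempty ∧ 0 ∉ S ∧ S.sum id = n := by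
    intro S hS
    obtain ⟨hD, _⟩ := (hG S).mp hS
    obtain ⟨hsub, hsum, h0⟩ := mem_Dn.mp hD
    refine ⟨?_, h0, hsum⟩
    rcases Finset.eq_empty_or_nonempty S with rfl | hne
    · simp at hsum; omega
    · exact hne
  refine Finset.sum_involution (fun S _ => Phi S) (fun a ha => by decide) ?_ ?_ ?_
  · -- Phi a ≠ a
    intro a ha _
    show Phi a ≠ a
    obtain ⟨h, h0, hsum⟩ := hfacts a ha
    obtain ⟨hD, hexc⟩ := (hG a).mp ha
    by_cases hbr : mn a ≤ sg a
    · have hexcA : a ≠ Finset.Icc (mn a) (2 * mn a - 1) :=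
        hexc _ _ (mn_pos h h0) (by have := mn_pos h h0; omega) (Or.inl rfl)
      have hM := key1 h h0 hbr hexcA
      rw [Phi_up hbr]
      exact up_ne h h0 hbr hM
    · push_neg at hbr
      have hexcB : a ≠ Finset.Icc (sg a + 1) (2 * sg a) :=
        hexc _ _ (by omega) (by have := sg_pos h; omega) (Or.inr (by omega))
      have hM := key2 h h0 hbr hexcB
      rw [Phi_down (by omega)]
      exact down_ne h h0 hbr hM
  · -- Phi a ∈ G
    intro a ha
    show Phi a ∈ G
    obtain ⟨h, h0, hsum⟩ := hfacts a ha
    obtain ⟨hD, hexc⟩ := (hG a).mp ha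
    by_cases hbr : mn a ≤ sg a
    · have hexcA : a ≠ Finset.Icc (mn a) (2 * mn a - 1) :=
        hexc _ _ (mn_pos h h0) (by have := mn_pos h h0; omega) (Or.inl rfl)
      have hM := key1 h h0 hbr hexcA
      rw [Phi_up hbr]
      rw [hG]
      have hsum' : (upF a).sum id = n := by rw [up_sum h h0 hbr hM, hsum]
      refine ⟨mem_Dn.mpr ⟨?_, hsum', up_zero h h0 hbr hM⟩, ?_⟩
      · intro x hx
        rw [Finset.mem_range]
        have := mem_le_sum hx
        omega
      · intro a' b' h1' h2' h3' heq
        have e1 : mn (upF a) = a' := by rw [heq, mn_Icc h2']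
        have e2 : sg (upF a) = b' + 1 - a' := by rw [heq, sg_Icc h1' h2']
        have e3 := up_sg h h0 hbr hM
        have e4 := up_mn h h0 hbr hM
        rcases h3' with h3' | h3'
        · omega
        · have e5 : a' = mn a + 1 ∧ b' = 2 * mn a := by omega
          rw [e5.1, e5.2] at heq
          exact up_ne_exc h h0 hbr hM heq
    · push_neg at hbr
      have hexcB : a ≠ Finset.Icc (sg a + 1) (2 * sg a) :=
        hexc _ _ (by omega) (by have := sg_pos h; omega) (Or.inr (by omega))
      have hM := key2 h h0 hbr hexcB
      rw [Phi_down (by omega)]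
      rw [hG]
      have hsum' : (downF a).sum id = n := by rw [down_sum h h0 hbr hM, hsum]
      refine ⟨mem_Dn.mpr ⟨?_, hsum', down_zero h h0 hbr hM⟩, ?_⟩
      · intro x hx
        rw [Finset.mem_range]
        have := mem_le_sum hx
        omega
      · intro a' b' h1' h2' h3' heq
        have e1 : mn (downF a) = a' := by rw [heq, mn_Icc h2']
        have e2 : sg (downF a) = b' + 1 - a' := by rw [heq, sg_Icc h1' h2']
        have e3 := down_mn h h0 hbr hM
        have e4 := down_sg_ge h h0 hbr hM
        rcases h3' with h3' | h3'
        · have e5 : a' = sg a ∧ b' = 2 * sg a - 1 := by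
            have := sg_pos h
            omega
          rw [e5.1, e5.2] at heq
          exact down_ne_exc h h0 hbr hM heq
        · omega
  · -- Phi (Phi a) = a
    intro a ha
    show Phi (Phi a) = a
    obtain ⟨h, h0, hsum⟩ := hfacts a ha
    obtain ⟨hD, hexc⟩ := (hG a).mp ha
    by_cases hbr : mn a ≤ sg a
    · have hexcA : a ≠ Finset.Icc (mn a) (2 * mn a - 1) :=
        hexc _ _ (mn_pos h h0) (by have := mn_pos h h0; omega) (Or.inl rfl)
      have hM := key1 h h0 hbr hexcA
      have e3 := up_sg h h0 hbr hM
      have e4 := up_mn h h0 hbr hM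
      rw [Phi_up hbr, Phi_down (by omega)]
      exact down_up h h0 hbr hM
    · push_neg at hbr
      have hexcB : a ≠ Finset.Icc (sg a + 1) (2 * sg a) :=
        hexc _ _ (by omega) (by have := sg_pos h; omega) (Or.inr (by omega))
      have hM := key2 h h0 hbr hexcB
      have e3 := down_mn h h0 hbr hM
      have e4 := down_sg_ge h h0 hbr hM
      rw [Phi_down (by omega : ¬ mn a ≤ sg a), Phi_up (S := downF a) e4]
      exact up_down h h0 hbr hM



lemma sum_Icc_two {a b : ℕ} (h1 : 1 ≤ a) (h2 : a ≤ b) :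
    ((Finset.Icc a b).sum id) * 2 = (a + b) * (b + 1 - a) := by
  show (∑ x ∈ Finset.Icc a b, x) * 2 = (a + b) * (b + 1 - a)
  induction b with
  | zero => omega
  | succ b ih =>
    rcases Nat.lt_or_ge b a with hb | hb
    · have ha : a = b + 1 := by omega
      subst ha
      rw [Finset.Icc_self, Finset.sum_singleton]
      rw [show b + 1 + 1 - (b + 1) = 1 from by omega, mul_one]
      omega
    · have ih' := ih hb
      rw [Finset.sum_Icc_succ_top (by omega : a ≤ b + 1)]
      obtain ⟨c, rfl⟩ : ∃ c, b = a + c := ⟨b - a, by omega⟩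
      rw [show a + (a + c) = 2 * a + c from by omega,
        show a + c + 1 - a = c + 1 from by omega] at ih'
      rw [show a + (a + c + 1) = 2 * a + c + 1 from by omega,
        show a + c + 1 + 1 - a = c + 2 from by omega]
      zify at ih' ⊢
      linear_combination ih'

def Em (m : ℤ) : Finset ℕ :=
  if 0 < m then Finset.Icc m.toNat (2 * m.toNat - 1)
  else Finset.Icc ((-m).toNat + 1) (2 * (-m).toNat)

lemma Em_sum (m : ℤ) : (((Em m).sum id : ℕ) : ℤ) * 2 = m * (3 * m - 1) := by
  rw [Em]
  split
  · rename_i hm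
    have hj : ((m.toNat : ℤ)) = m := Int.toNat_of_nonneg (by omega)
    have hj1 : 1 ≤ m.toNat := by omega
    have hsum := sum_Icc_two (a := m.toNat) (b := 2 * m.toNat - 1) hj1 (by omega)
    rw [show m.toNat + (2 * m.toNat - 1) = 3 * m.toNat - 1 by omega,
      show 2 * m.toNat - 1 + 1 - m.toNat = m.toNat by omega] at hsum
    zify [show 1 ≤ 3 * m.toNat by omega] at hsum
    simp only [id_eq] at hsum ⊢
    push_cast at hsum ⊢
    rw [hj] at hsum
    linear_combination hsum
  · rename_i hm
    by_cases hj0 : (-m).toNat = 0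
    · have hm0 : m = 0 := by omega
      rw [hj0, hm0]
      norm_num
    · have hj : (((-m).toNat : ℤ)) = -m := Int.toNat_of_nonneg (by omega)
      have hj1 : 1 ≤ (-m).toNat := by omega
      have hsum := sum_Icc_two (a := (-m).toNat + 1) (b := 2 * (-m).toNat) (by omega) (by omega)
      rw [show (-m).toNat + 1 + 2 * (-m).toNat = 3 * (-m).toNat + 1 by omega,
        show 2 * (-m).toNat + 1 - ((-m).toNat + 1) = (-m).toNat by omega] at hsum
      zify at hsum
      simp only [id_eq] at hsum ⊢
      push_cast at hsum ⊢
      rw [hj] at hsum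
      linear_combination hsum

lemma Em_zero (m : ℤ) : (0 : ℕ) ∉ Em m := by
  rw [Em]
  split <;> rw [Finset.mem_Icc] <;> omega

lemma Em_pattern (m : ℤ) (hm : m ≠ 0) :
    ∃ a b, 1 ≤ a ∧ a ≤ b ∧ (b = 2 * a - 1 ∨ b = 2 * a - 2) ∧ Em m = Finset.Icc a b := by
  rw [Em]
  split
  · rename_i h
    exact ⟨m.toNat, 2 * m.toNat - 1, by omega, by omega, Or.inl rfl, rfl⟩
  · rename_i h
    exact ⟨(-m).toNat + 1, 2 * (-m).toNat, by omega, by omega, Or.inr (by omega), rfl⟩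

lemma pattern_Em {a b : ℕ} (h1 : 1 ≤ a) (h2 : a ≤ b) (h3 : b = 2 * a - 1 ∨ b = 2 * a - 2) :
    ∃ m : ℤ, Finset.Icc a b = Em m := by
  rcases h3 with h3 | h3
  · refine ⟨(a : ℤ), ?_⟩
    rw [Em, if_pos (by exact_mod_cast h1)]
    congr 1 <;> omega
  · refine ⟨-((a : ℤ) - 1), ?_⟩
    rw [Em, if_neg (by omega)]
    congr 1 <;> omega

lemma step2 (n : ℕ) :
    ∑ S ∈ Dn n, (1 : ZMod 2) = if ∃ m : ℤ, (n : ℤ) * 2 = m * (3 * m - 1) then 1 else 0 := by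
  rcases Nat.eq_zero_or_pos n with rfl | hn
  · have hD : Dn 0 = {∅} := by
      apply Finset.ext
      intro S
      rw [mem_Dn, Finset.mem_singleton]
      constructor
      · rintro ⟨hsub, hsum, h0⟩
        by_contra hS
        obtain ⟨x, hx⟩ := Finset.nonempty_iff_ne_empty.mpr hS
        have h1 := mem_le_sum hx
        have h2 : x = 0 := by omega
        exact h0 (h2 ▸ hx)
      · rintro rfl
        exact ⟨by simp, by simp, by simp⟩
    rw [hD, Finset.sum_singleton, if_pos ⟨0, by norm_num⟩]
  · by_cases hP : ∃ m : ℤ, (n : ℤ) * 2 = m * (3 * m - 1)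
    · obtain ⟨m, hm⟩ := hP
      have hm0 : m ≠ 0 := by
        rintro rfl
        norm_num at hm
        omega
      have hEsum : (Em m).sum id = n := by
        have h3 : (((Em m).sum id : ℕ) : ℤ) * 2 = (n : ℤ) * 2 := by rw [Em_sum, hm]
        exact_mod_cast mul_right_cancel₀ (two_ne_zero) h3
      have hE : Em m ∈ Dn n := mem_Dn.mpr
        ⟨fun x hx => Finset.mem_range.mpr (by have := mem_le_sum hx; omega), hEsum, Em_zero m⟩
      rw [if_pos ⟨m, hm⟩, ← Finset.add_sum_erase _ _ hE]
      have hz : ∑ S ∈ (Dn n).erase (Em m), (1 : ZMod 2) = 0 := by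
        apply invol n hn
        intro S
        rw [Finset.mem_erase]
        constructor
        · rintro ⟨hne', hD⟩
          refine ⟨hD, ?_⟩
          rintro a b h1 h2 h3 rfl
          obtain ⟨m', hm'⟩ := pattern_Em h1 h2 h3
          have hsum' : (Finset.Icc a b).sum id = n := (mem_Dn.mp hD).2.1
          have h4 : m' * (3 * m' - 1) = m * (3 * m - 1) := by
            rw [← Em_sum m', ← hm', hsum', hm]
          have h5 : m' = m := pent_inj h4
          exact hne' (by rw [hm', h5])
        · rintro ⟨hD, hexc⟩
          refine ⟨?_, hD⟩
          obtain ⟨a, b, h1, h2, h3, hEm⟩ := Em_pattern m hm0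
          intro hSE
          exact hexc a b h1 h2 h3 (hSE.trans hEm)
      rw [hz, add_zero]
    · rw [if_neg hP]
      apply invol n hn
      intro S
      constructor
      · intro hS
        refine ⟨hS, ?_⟩
        rintro a b h1 h2 h3 rfl
        obtain ⟨m', hm'⟩ := pattern_Em h1 h2 h3
        apply hP
        refine ⟨m', ?_⟩
        have hsum' : (Finset.Icc a b).sum id = n := (mem_Dn.mp hS).2.1
        rw [← hsum', ← Em_sum m', ← hm']
      · exact fun hS => hS.1



lemma step1 (n : ℕ) :
    (PowerSeries.coeff (R := ZMod 2) n) (f 1) = ∑ S ∈ Dn n, (1 : ZMod 2) := by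
  rw [f, PowerSeries.coeff_mk]
  have hneg : ∀ φ : PowerSeries (ZMod 2), -φ = φ := fun φ =>
    PowerSeries.ext fun k => by rw [map_neg, CharTwo.neg_eq]
  have h2 : ∏ k ∈ Finset.range (n + 1), ((1 : PowerSeries (ZMod 2)) - X ^ (1 * (k + 1)))
      = ∏ k ∈ Finset.range (n + 1), ((X : PowerSeries (ZMod 2)) ^ (k + 1) + 1) :=
    Finset.prod_congr rfl fun k _ => by rw [one_mul, sub_eq_add_neg, hneg, add_comm]
  rw [h2, Finset.prod_add]
  simp only [Finset.prod_const_one, mul_one, Finset.prod_pow_eq_pow_sum]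
  rw [map_sum]
  simp only [PowerSeries.coeff_X_pow]
  rw [← Finset.sum_filter]
  refine Finset.sum_bij' (i := fun t _ => Finset.image (fun k => k + 1) t)
      (j := fun T _ => Finset.image (fun x => x - 1) T) ?_ ?_ ?_ ?_ ?_
  · -- hi : image ∈ Dn n
    intro t ht
    rw [Finset.mem_filter, Finset.mem_powerset] at ht
    obtain ⟨hsub, hsum⟩ := ht
    rw [mem_Dn]
    have hinj : ∀ x ∈ t, ∀ y ∈ t, x + 1 = y + 1 → x = y := by intro x _ y _ h; omega
    refine ⟨?_, ?_, ?_⟩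
    · intro x hx
      rw [Finset.mem_image] at hx
      obtain ⟨k, hk, rfl⟩ := hx
      have := Finset.mem_range.mp (hsub hk)
      rw [Finset.mem_range]
      omega
    · rw [Finset.sum_image hinj]
      exact hsum.symm
    · intro hx
      rw [Finset.mem_image] at hx
      obtain ⟨k, _, hk⟩ := hx
      omega
  · -- hj
    intro T hT
    rw [mem_Dn] at hT
    obtain ⟨hsub, hsum, h0⟩ := hT
    rw [Finset.mem_filter, Finset.mem_powerset]
    have hpos : ∀ x ∈ T, 1 ≤ x := by
      intro x hx
      rcases Nat.eq_zero_or_pos x with rfl | h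
      · exact absurd hx h0
      · exact h
    have hinj : ∀ x ∈ T, ∀ y ∈ T, x - 1 = y - 1 → x = y := by
      intro x hx y hy hxy
      have := hpos x hx
      have := hpos y hy
      omega
    constructor
    · intro x hx
      rw [Finset.mem_image] at hx
      obtain ⟨y, hy, rfl⟩ := hx
      have h1 := hpos y hy
      have h2 := Finset.mem_range.mp (hsub hy)
      rw [Finset.mem_range]
      omega
    · rw [Finset.sum_image hinj, ← hsum]
      apply Finset.sum_congr rfl
      intro x hx
      have := hpos x hx
      simp only [id_eq]
      omega
  · -- left inverse
    intro t ht
    show Finset.image (fun x => x - 1) (Finset.image (fun k => k + 1) t) = t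
    rw [Finset.image_image]
    have : ∀ x ∈ t, (fun x => x - 1) ∘ (fun k => k + 1) = id ∨ True := fun _ _ => Or.inr trivial
    refine Finset.ext fun x => ?_
    simp only [Finset.mem_image, Function.comp_apply, id_eq]
    constructor
    · rintro ⟨k, hk, rfl⟩
      simpa using hk
    · intro hx
      exact ⟨x, hx, by omega⟩
  · -- right inverse
    intro T hT
    rw [mem_Dn] at hT
    obtain ⟨hsub, hsum, h0⟩ := hT
    show Finset.image (fun k => k + 1) (Finset.image (fun x => x - 1) T) = T
    rw [Finset.image_image]
    refine Finset.ext fun x => ?_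
    simp only [Finset.mem_image, Function.comp_apply]
    constructor
    · rintro ⟨y, hy, rfl⟩
      have : 1 ≤ y := by
        rcases Nat.eq_zero_or_pos y with rfl | h
        · exact absurd hy h0
        · exact h
      have : y - 1 + 1 = y := by omega
      rwa [this]
    · intro hx
      have : 1 ≤ x := by
        rcases Nat.eq_zero_or_pos x with rfl | h
        · exact absurd hx h0
        · exact h
      exact ⟨x, hx, by omega⟩
  · intro t ht
    rfl

end PentAux

/-- Euler's pentagonal number theorem mod 2: the coefficient of `q^n` in
`∏_{k≥1}(1-q^k)` over `ZMod 2` is `1` exactly when `n` is a generalized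
pentagonal number `m(3m-1)/2`, `m ∈ ℤ`, and `0` otherwise. -/
theorem pentagonal_mod_two :
    ∀ n : ℕ, PowerSeries.coeff (R := ZMod 2) n (f 1) =
      if ∃ m : ℤ, (n : ℤ) * 2 = m * (3 * m - 1) then 1 else 0 := by
  intro n
  rw [PentAux.step1 n, PentAux.step2 n]
end

section
/- Jacobi's identity modulo 2: the cube of the infinite product ∏_{k≥1}(1 - q^k), viewed as a formal power series over ℤ/2ℤ, equals ∑_{n≥0} q^{n(n+1)/2}. -/
open PowerSeries
open scoped Classical

noncomputable section JacobiAux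

abbrev S2 : Type := PowerSeries (ZMod 2)

lemma S2.two_eq_zero : (2 : S2) = 0 := by
  have h : (2 : S2) = PowerSeries.C (R := ZMod 2) 2 := by rw [map_ofNat]
  rw [h]; norm_num; rfl

/-- Gaussian binomial coefficient over `ZMod 2`, as a power series. -/
noncomputable def gb : ℕ → ℕ → S2
  | _, 0 => 1
  | 0, _+1 => 0
  | n+1, k+1 => gb n k + PowerSeries.X ^ (k+1) * gb n (k+1)

@[simp] lemma gb_zero (n : ℕ) : gb n 0 = 1 := by cases n <;> rfl

@[simp] lemma gb_zero_succ (k : ℕ) : gb 0 (k+1) = 0 := rfl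

lemma gb_succ (n k : ℕ) : gb (n+1) (k+1) = gb n k + X ^ (k+1) * gb n (k+1) := rfl

lemma gb_of_lt : ∀ {n k : ℕ}, n < k → gb n k = 0 := by
  intro n
  induction n with
  | zero => intro k h; cases k with
    | zero => omega
    | succ k => rfl
  | succ n ih =>
    intro k h
    cases k with
    | zero => omega
    | succ k =>
      rw [gb_succ, ih (by omega), ih (by omega), mul_zero, add_zero]

@[simp] lemma gb_self : ∀ n : ℕ, gb n n = 1 := by
  intro n
  induction n with
  | zero => rfl
  | succ n ih => rw [gb_succ, ih, gb_of_lt (by omega), mul_zero, add_zero]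

lemma one_add_X_ne_zero : (1 + X : S2) ≠ 0 := by
  intro h
  have := congrArg (PowerSeries.constantCoeff (R := ZMod 2)) h
  simp at this

lemma gb_geom : ∀ n : ℕ, (1 + X) * gb n 1 = 1 + X ^ n := by
  intro n
  induction n with
  | zero =>
    have htwo := S2.two_eq_zero
    simp only [gb_zero_succ, mul_zero, pow_zero]
    linear_combination -htwo
  | succ n ih =>
    have htwo := S2.two_eq_zero
    rw [gb_succ, gb_zero, pow_one]
    linear_combination X * ih + X * htwo

/-- Second Pascal rule. -/
lemma gb_pascal' : ∀ n k : ℕ, gb (n+1) (k+1) = X ^ (n-k) * gb n k + gb n (k+1) := by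
  intro n
  induction n with
  | zero =>
    intro k
    cases k with
    | zero => simp [gb_succ]
    | succ k => simp [gb_succ, gb_of_lt (show 0 < k+1 by omega), gb_of_lt (show 0 < k+2 by omega)]
  | succ n ih =>
    intro k
    cases k with
    | zero =>
      have hg := gb_geom (n+1)
      have htwo := S2.two_eq_zero
      simp only [Nat.sub_zero, gb_zero, mul_one]
      have hc : (1 + X) * gb (n+2) 1 = (1 + X) * (X ^ (n+1) + gb (n+1) 1) := by
        rw [show gb (n+2) 1 = gb (n+1) 0 + X^1 * gb (n+1) 1 from rfl, gb_zero, pow_one]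
        linear_combination (X - 1) * hg + (X - X^(n+1)) * htwo
      exact mul_left_cancel₀ one_add_X_ne_zero hc
    | succ k =>
      simp only [Nat.succ_sub_succ]
      rcases lt_trichotomy k n with hlt | heq | hgt
      · have h1 := gb_succ (n+1) (k+1)
        have h2 := ih k
        have h3 := ih (k+1)
        have h4 := gb_succ n (k+1)
        have h2s := gb_succ n k
        have hexp1 : (X:S2)^(k+2) * X^(n-k-1) = X^(n-k) * X^(k+1) := by
          rw [← pow_add, ← pow_add]; congr 1; omega
        calc gb (n+2) (k+2) = gb (n+1) (k+1) + X^(k+2) * gb (n+1) (k+2) := h1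
        _ = X^(n-k) * gb (n+1) (k+1) + gb (n+1) (k+2) := by
            have h3' : gb (n+1) (k+2) = X^(n-(k+1)) * gb n (k+1) + gb n (k+2) := h3
            rw [show n - (k+1) = n - k - 1 by omega] at h3'
            linear_combination h2 + X^(k+2) * h3' - h4 - X^(n-k) * h2s + (gb n (k+1)) * hexp1
      · rw [heq]
        simp [Nat.sub_self, gb_self, gb_of_lt (show n+1 < n+1+1 by omega)]
      · rw [gb_of_lt (show n+2 < k+2 by omega), gb_of_lt (show n+1 < k+1 by omega),
          gb_of_lt (show n+1 < k+2 by omega), mul_zero, add_zero]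

/-- Symmetry. -/
lemma gb_symm : ∀ n k : ℕ, k ≤ n → gb n k = gb n (n - k) := by
  intro n
  induction n with
  | zero => intro k h; interval_cases k; rfl
  | succ n ih =>
    intro k hk
    cases k with
    | zero => simp
    | succ k =>
      rcases Nat.lt_or_ge k n with hlt | hge
      · -- n - k = (n-k-1)+1 ; use pascal' on RHS
        have hrw : n + 1 - (k+1) = (n - k - 1) + 1 := by omega
        rw [hrw, gb_succ, gb_pascal' n (n-k-1)]
        rw [show n - (n - k - 1) = k + 1 by omega, show n - k - 1 + 1 = n - k by omega]
        rw [show n - k - 1 = n - (k+1) by omega]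
        rw [← ih k (by omega), ← ih (k+1) (by omega)]
        ring
      · have hkn : k = n := by omega
        rw [hkn]
        simp
lemma gb_P3 : ∀ n : ℕ,
    (∀ k, (1+X^(k+1)) * gb (n+1) (k+1) = (1+X^(n+1)) * gb n k) ∧
    (∀ k, (1+X^(n+1-k)) * gb (n+1) k = (1+X^(n+1)) * gb n k) := by
  intro n
  induction n with
  | zero =>
    constructor
    · intro k
      cases k with
      | zero => simp [gb_succ]
      | succ k => simp [gb_of_lt (show 1 < k+2 by omega), gb_of_lt (show 0 < k+1 by omega)]
    · intro k
      have htwo := S2.two_eq_zero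
      match k with
      | 0 => simp
      | 1 =>
        simp only [Nat.sub_self, pow_zero, gb_self, mul_one, gb_zero_succ, mul_zero]
        linear_combination htwo
      | (k+2) =>
        rw [gb_of_lt (show 1 < k+2 by omega), gb_of_lt (show 0 < k+2 by omega)]
        simp
  | succ n ih =>
    obtain ⟨An, Bn⟩ := ih
    have Bnew : ∀ k, (1+X^(n+2-k)) * gb (n+2) k = (1+X^(n+2)) * gb (n+1) k := by
      intro k
      cases k with
      | zero => simp
      | succ k' =>
        rcases Nat.lt_or_ge (n+2) (k'+1) with hgt | hle
        · rw [gb_of_lt (show n+2 < k'+1 by omega), gb_of_lt (show n+1 < k'+1 by omega)]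
          simp
        · have htwo := S2.two_eq_zero
          have hP2 : gb (n+2) (k'+1) = X^(n+1-k') * gb (n+1) k' + gb (n+1) (k'+1) :=
            gb_pascal' (n+1) k'
          have hB : (1+X^(n+1-k')) * gb (n+1) k' = (1+X^(n+1)) * gb n k' := Bn k'
          have hA : (1+X^(k'+1)) * gb (n+1) (k'+1) = (1+X^(n+1)) * gb n k' := An k'
          have hexp : (X:S2)^(n+1-k') * X^(k'+1) = X^(n+2) := by
            rw [← pow_add]; congr 1; omega
          rw [show n+2-(k'+1) = n+1-k' by omega]
          linear_combination (1+X^(n+1-k'))*hP2 + X^(n+1-k')*hB - X^(n+1-k')*hA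
            + (gb (n+1) (k'+1))*hexp + (X^(n+1-k') * gb (n+1) (k'+1))*htwo
    refine ⟨?_, Bnew⟩
    intro k
    rcases Nat.lt_or_ge (n+1) k with hgt | hle
    · rw [gb_of_lt (show n+2 < k+1 by omega), gb_of_lt (show n+1 < k by omega)]
      simp
    · have htwo := S2.two_eq_zero
      have h1 : gb (n+2) (k+1) = gb (n+1) k + X^(k+1) * gb (n+1) (k+1) := gb_succ (n+1) k
      have hA : (1+X^(k+1)) * gb (n+1) (k+1) = (1+X^(n+1)) * gb n k := An k
      have hBn : (1+X^(n+1-k)) * gb (n+1) k = (1+X^(n+1)) * gb n k := Bn k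
      have hexp : (X:S2)^(k+1) * X^(n+1-k) = X^(n+2) := by
        rw [← pow_add]; congr 1; omega
      linear_combination (1+X^(k+1))*h1 + X^(k+1)*hA - X^(k+1)*hBn
        + (gb (n+1) k)*hexp + (X^(k+1) * gb (n+1) k)*htwo

lemma gb_q3 (n k : ℕ) : (1+X^(k+1)) * gb (n+1) (k+1) = (1+X^(n+1-k)) * gb (n+1) k := by
  rw [(gb_P3 n).1 k, (gb_P3 n).2 k]

lemma gb_star1 (M : ℕ) :
    gb (2*M+2) 1 = (1+X^(2*M+1)) * gb (2*M) 0 + X * gb (2*M) 1 := by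
  have htwo := S2.two_eq_zero
  have hG1 : (1 + X) * gb (2*M+2) 1 = 1 + X ^ (2*M+2) := gb_geom (2*M+2)
  have hG2 : (1 + X) * gb (2*M) 1 = 1 + X ^ (2*M) := gb_geom (2*M)
  have hexp : (X:S2) * X^(2*M) = X^(2*M+1) := by
    rw [← pow_succ']
  have hc : (1 + X) * gb (2*M+2) 1 = (1 + X) * ((1+X^(2*M+1)) * gb (2*M) 0 + X * gb (2*M) 1) := by
    rw [gb_zero, mul_one]
    linear_combination hG1 - X*hG2 - hexp - (X + X^(2*M+1))*htwo
  exact mul_left_cancel₀ one_add_X_ne_zero hc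

lemma gb_star (M j : ℕ) (hj : j ≤ 2*M) :
    gb (2*M+2) (j+2) = (1+X^(2*M+1)) * gb (2*M) (j+1)
      + X^(j+2) * gb (2*M) (j+2) + X^(2*M-j) * gb (2*M) j := by
  match M, hj with
  | 0, _ =>
    have hj0 : j = 0 := by omega
    subst hj0
    simp [gb_of_lt (show 0 < 1 by omega), gb_of_lt (show 0 < 2 by omega)]
  | (M'+1), hj =>
    set M := M' + 1 with hM
    rcases Nat.lt_or_ge j (2*M) with hlt | hge
    · -- j ≤ 2M - 1
      have htwo := S2.two_eq_zero
      have h1 : gb (2*M+2) (j+2) = gb (2*M+1) (j+1) + X^(j+2) * gb (2*M+1) (j+2) :=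
        gb_succ (2*M+1) (j+1)
      have h2 : gb (2*M+1) (j+1) = X^(2*M-j) * gb (2*M) j + gb (2*M) (j+1) :=
        gb_pascal' (2*M) j
      have h3 : gb (2*M+1) (j+2) = gb (2*M) (j+1) + X^(j+2) * gb (2*M) (j+2) :=
        gb_succ (2*M) (j+1)
      have h4 : (1+X^(j+2)) * gb (2*M) (j+2) = (1+X^(2*M-1-j)) * gb (2*M) (j+1) := by
        have := gb_q3 (2*M'+1) (j+1)
        rw [show (2*M'+1)+1-(j+1) = 2*M-1-j by omega] at this
        exact this
      have hexp : (X:S2)^(j+2) * X^(2*M-1-j) = X^(2*M+1) := by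
        rw [← pow_add]; congr 1; omega
      linear_combination h1 + h2 + X^(j+2)*h3 + X^(j+2)*h4 + (gb (2*M) (j+1))*hexp
        + (X^(j+2)*(gb (2*M) (j+1)) - X^(j+2)*(gb (2*M) (j+2))) * htwo
    · have hj2 : j = 2*M := by omega
      subst hj2
      rw [Nat.sub_self, pow_zero, gb_of_lt (show 2*M < 2*M+1 by omega),
        gb_of_lt (show 2*M < 2*M+2 by omega)]
      simp
def tri : ℕ → ℕ
  | 0 => 0
  | s+1 => tri s + (s+1)

lemma tri_succ (s : ℕ) : tri (s+1) = tri s + (s+1) := rfl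

lemma tri_expand (a b : ℕ) (h : b = a + 1) : tri b = tri a + b := by
  subst h; exact tri_succ a

lemma le_tri : ∀ s : ℕ, s ≤ tri s := by
  intro s; induction s with
  | zero => simp [tri]
  | succ s ih => rw [tri_succ]; omega

lemma two_mul_le_tri : ∀ s : ℕ, 2*s ≤ tri s + 1 := by
  intro s; induction s with
  | zero => simp [tri]
  | succ s ih => rw [tri_succ]; have := le_tri s; omega

lemma tri_lt_tri : ∀ a b : ℕ, a < b → tri a < tri b := by
  intro a b h
  induction b with
  | zero => omega
  | succ b ih =>
    rw [tri_succ]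
    rcases Nat.lt_or_ge a b with h' | h'
    · have := ih h'; omega
    · have : a = b := by omega
      subst this; omega

lemma tri_inj {a b : ℕ} (h : tri a = tri b) : a = b := by
  rcases lt_trichotomy a b with h' | h' | h'
  · have := tri_lt_tri a b h'; omega
  · exact h'
  · have := tri_lt_tri b a h'; omega

lemma tri_mul_two : ∀ s : ℕ, tri s * 2 = s * (s+1) := by
  intro s; induction s with
  | zero => rfl
  | succ s ih =>
    rw [tri_succ]
    zify at ih ⊢
    linear_combination ih

/-- exponent of `q` attached to position `j` (representing `z^(j-N)`): `T(j-N)`. -/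
def uu (N j : ℕ) : ℕ := if N ≤ j then tri (j - N) else tri (N - 1 - j)

lemma e1 (M j : ℕ) : uu (M+1) (j+1) = uu M j := by
  unfold uu
  rcases Nat.lt_or_ge j M with h | h
  · rw [if_neg (by omega), if_neg (by omega)]
    congr 1; omega
  · rw [if_pos (by omega), if_pos (by omega)]
    congr 1; omega

lemma e2 (M j : ℕ) : uu M j + M = uu (M+1) j + j := by
  unfold uu
  split_ifs with h1 h2 h2
  · -- M ≤ j, M+1 ≤ j
    rw [show j - (M+1) = j - M - 1 by omega, tri_expand (j - M - 1) (j - M) (by omega)]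
    omega
  · -- M ≤ j, ¬(M+1 ≤ j)  ⟹ j = M
    rw [show j - M = 0 by omega, show M + 1 - 1 - j = 0 by omega]
    omega
  · omega
  · -- j < M
    rw [show M + 1 - 1 - j = M - j by omega, tri_expand (M - 1 - j) (M - j) (by omega)]
    omega

lemma e3 (M j : ℕ) (hj : j ≤ 2*M) : uu M j + (M+1) = uu (M+1) (j+2) + (2*M - j) := by
  unfold uu
  split_ifs with h1 h2 h2
  · -- M ≤ j
    rw [tri_expand (j - M) (j + 2 - (M+1)) (by omega)]
    omega
  · omega
  · -- j < M, M+1 ≤ j+2 ⟹ j = M-1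
    rw [show M - 1 - j = 0 by omega, show j + 2 - (M+1) = 0 by omega]
    omega
  · -- j ≤ M-2
    rw [tri_expand (M + 1 - 1 - (j+2)) (M - 1 - j) (by omega)]
    omega

/-- the `j`-th term of the expansion. -/
noncomputable def tm (M j : ℕ) : S2 := gb (2*M) j * X^(uu M j)

noncomputable def Os (N : ℕ) : S2 := ∑ i ∈ Finset.range N, tm N (2*i+1)
noncomputable def Es (N : ℕ) : S2 := ∑ i ∈ Finset.range (N+1), tm N (2*i)

noncomputable def Pp (N : ℕ) : S2 := ∏ k ∈ Finset.range N, (1 + X^(k+1))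

lemma Pp_zero : Pp 0 = 1 := rfl
lemma Pp_succ (N : ℕ) : Pp (N+1) = Pp N * (1+X^(N+1)) := Finset.prod_range_succ _ N

lemma tm_top_odd (M : ℕ) : tm M (2*M+1) = 0 := by
  rw [tm, gb_of_lt (show 2*M < 2*M+1 by omega), zero_mul]

lemma tm_top_even (M : ℕ) : tm M (2*M+2) = 0 := by
  rw [tm, gb_of_lt (show 2*M < 2*M+2 by omega), zero_mul]

lemma T0 (M : ℕ) : tm (M+1) 0 = X^M * tm M 0 := by
  unfold tm
  rw [show 2*(M+1) = 2*M+2 by ring, gb_zero, gb_zero, one_mul, one_mul, ← pow_add]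
  congr 1
  have := e2 M 0
  omega

lemma T1 (M : ℕ) : tm (M+1) 1 = (1+X^(2*M+1)) * tm M 0 + X^M * tm M 1 := by
  unfold tm
  rw [show 2*(M+1) = 2*M+2 by ring]
  have hstar := gb_star1 M
  have hu1 : uu (M+1) 1 = uu M 0 := e1 M 0
  have hu2 : (X:S2)^1 * X^(uu M 0) = X^M * X^(uu M 1) := by
    rw [← pow_add, ← pow_add]
    have h1 := e2 M 1
    have h2 := e1 M 0
    congr 1
    omega
  rw [hstar, hu1]
  linear_combination (gb (2*M) 1) * hu2

lemma Tgen (M j : ℕ) (hj : j ≤ 2*M) :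
    tm (M+1) (j+2) = (1+X^(2*M+1)) * tm M (j+1) + X^M * tm M (j+2) + X^(M+1) * tm M j := by
  unfold tm
  rw [show 2*(M+1) = 2*M+2 by ring]
  have hstar := gb_star M j hj
  have hu1 : uu (M+1) (j+2) = uu M (j+1) := e1 M (j+1)
  have hu2 : (X:S2)^(j+2) * X^(uu M (j+1)) = X^M * X^(uu M (j+2)) := by
    rw [← pow_add, ← pow_add]
    have h1 := e2 M (j+2)
    have h2 := e1 M (j+1)
    congr 1
    omega
  have hu3 : (X:S2)^(2*M-j) * X^(uu M (j+1)) = X^(M+1) * X^(uu M j) := by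
    rw [← pow_add, ← pow_add]
    have h1 := e3 M j hj
    have h2 := e1 M (j+1)
    congr 1
    omega
  rw [hstar, hu1]
  linear_combination (gb (2*M) (j+2)) * hu2 + (gb (2*M) j) * hu3
lemma TgenOdd (M i : ℕ) (hi : i < M) :
    tm (M+1) (2*(i+1)+1) = (1+X^(2*M+1)) * tm M (2*(i+1))
      + X^M * tm M (2*(i+1)+1) + X^(M+1) * tm M (2*i+1) := by
  rw [show 2*(i+1)+1 = (2*i+1)+2 by ring, show 2*(i+1) = (2*i+1)+1 by ring]
  exact Tgen M (2*i+1) (by omega)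

lemma TgenEven (M i : ℕ) (hi : i < M + 1) :
    tm (M+1) (2*(i+1)) = (1+X^(2*M+1)) * tm M (2*i+1)
      + X^M * tm M (2*(i+1)) + X^(M+1) * tm M (2*i) := by
  rw [show 2*(i+1) = (2*i)+2 by ring]
  have h := Tgen M (2*i) (by omega)
  rw [show (2*i)+1 = 2*i+1 by ring] at h
  exact h

lemma Orec (M : ℕ) :
    Os (M+1) = (1+X^(2*M+1)) * Es M + X^M * Os M + X^(M+1) * Os M := by
  have hsplit : Os (M+1)
      = ∑ i ∈ Finset.range M, tm (M+1) (2*(i+1)+1) + tm (M+1) (2*0+1) :=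
    Finset.sum_range_succ' _ M
  have h1 : ∑ i ∈ Finset.range M, tm (M+1) (2*(i+1)+1)
      = ∑ i ∈ Finset.range M, ((1+X^(2*M+1)) * tm M (2*(i+1))
          + X^M * tm M (2*(i+1)+1) + X^(M+1) * tm M (2*i+1)) :=
    Finset.sum_congr rfl (fun i hi => TgenOdd M i (Finset.mem_range.mp hi))
  have hEs : Es M = ∑ i ∈ Finset.range M, tm M (2*(i+1)) + tm M (2*0) :=
    Finset.sum_range_succ' _ M
  have hOs' : ∑ i ∈ Finset.range (M+1), tm M (2*i+1)
      = ∑ i ∈ Finset.range M, tm M (2*(i+1)+1) + tm M (2*0+1) :=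
    Finset.sum_range_succ' _ M
  have hOs'' : ∑ i ∈ Finset.range (M+1), tm M (2*i+1) = Os M + tm M (2*M+1) :=
    Finset.sum_range_succ _ M
  have htop := tm_top_odd M
  have hT1 : tm (M+1) (2*0+1) = (1+X^(2*M+1)) * tm M (2*0) + X^M * tm M (2*0+1) := by
    norm_num
    exact T1 M
  rw [hsplit, h1, Finset.sum_add_distrib, Finset.sum_add_distrib,
    ← Finset.mul_sum, ← Finset.mul_sum, ← Finset.mul_sum, hT1]
  rw [htop, add_zero] at hOs''
  have hOsdef : Os M = ∑ i ∈ Finset.range M, tm M (2*i+1) := rfl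
  linear_combination (-(1+X^(2*M+1))) * hEs + X^M * hOs'' - X^M * hOs'
    - X^(M+1) * hOsdef
lemma Erec (M : ℕ) :
    Es (M+1) = (1+X^(2*M+1)) * Os M + X^M * Es M + X^(M+1) * Es M := by
  have hsplit : Es (M+1)
      = ∑ i ∈ Finset.range (M+1), tm (M+1) (2*(i+1)) + tm (M+1) (2*0) :=
    Finset.sum_range_succ' _ (M+1)
  have h1 : ∑ i ∈ Finset.range (M+1), tm (M+1) (2*(i+1))
      = ∑ i ∈ Finset.range (M+1), ((1+X^(2*M+1)) * tm M (2*i+1)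
          + X^M * tm M (2*(i+1)) + X^(M+1) * tm M (2*i)) :=
    Finset.sum_congr rfl (fun i hi => TgenEven M i (Finset.mem_range.mp hi))
  have hOs'' : ∑ i ∈ Finset.range (M+1), tm M (2*i+1) = Os M + tm M (2*M+1) :=
    Finset.sum_range_succ _ M
  rw [tm_top_odd M, add_zero] at hOs''
  have hEb' : ∑ i ∈ Finset.range (M+2), tm M (2*i)
      = ∑ i ∈ Finset.range (M+1), tm M (2*(i+1)) + tm M (2*0) :=
    Finset.sum_range_succ' _ (M+1)
  have hEb'' : ∑ i ∈ Finset.range (M+2), tm M (2*i)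
      = ∑ i ∈ Finset.range (M+1), tm M (2*i) + tm M (2*(M+1)) :=
    Finset.sum_range_succ _ (M+1)
  rw [show 2*(M+1) = 2*M+2 by ring, tm_top_even M, add_zero] at hEb''
  have hEsdef : Es M = ∑ i ∈ Finset.range (M+1), tm M (2*i) := rfl
  rw [← hEsdef] at hEb''
  have hT0 : tm (M+1) (2*0) = X^M * tm M (2*0) := by
    norm_num
    exact T0 M
  rw [hsplit, h1, Finset.sum_add_distrib, Finset.sum_add_distrib,
    ← Finset.mul_sum, ← Finset.mul_sum, ← Finset.mul_sum, hT0]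
  linear_combination (1+X^(2*M+1)) * hOs'' - X^M * hEb' + X^M * hEb''
    - X^(M+1) * hEsdef

lemma OEeq : ∀ M : ℕ, Os (M+1) = Pp (M+1) * Pp M ∧ Es (M+1) = Pp (M+1) * Pp M := by
  intro M
  induction M with
  | zero =>
    have hO0 : Os 0 = 0 := Finset.sum_range_zero _
    have hE0 : Es 0 = 1 := by
      rw [show Es 0 = ∑ i ∈ Finset.range 1, tm 0 (2*i) from rfl, Finset.sum_range_one]
      norm_num [tm, uu, tri]
    have hOr := Orec 0
    have hEr := Erec 0
    rw [hO0, hE0] at hOr hEr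
    norm_num at hOr hEr
    rw [Pp_succ, Pp_zero]
    norm_num
    exact ⟨hOr, hEr⟩
  | succ M ih =>
    obtain ⟨ihO, ihE⟩ := ih
    have hOr := Orec (M+1)
    have hEr := Erec (M+1)
    rw [ihO, ihE] at hOr hEr
    have hPp2 : Pp (M+2) = Pp (M+1) * (1+X^(M+2)) := Pp_succ (M+1)
    have hPp1 : Pp (M+1) = Pp M * (1+X^(M+1)) := Pp_succ M
    have hexp : (X:S2)^(M+1) * X^(M+2) = X^(2*(M+1)+1) := by
      rw [← pow_add]; congr 1; ring
    constructor
    · rw [hOr, hPp2]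
      linear_combination (-(Pp (M+1) * (1+X^(M+2)))) * hPp1 - (Pp M * Pp (M+1)) * hexp
    · rw [hEr, hPp2]
      linear_combination (-(Pp (M+1) * (1+X^(M+2)))) * hPp1 - (Pp M * Pp (M+1)) * hexp
lemma Pp_const (N : ℕ) : (coeff (R := ZMod 2) 0) (Pp N) = 1 := by
  rw [PowerSeries.coeff_zero_eq_constantCoeff]
  unfold Pp
  rw [map_prod]
  apply Finset.prod_eq_one
  intro k _
  simp

lemma blem : ∀ M K d : ℕ, d ≤ K →
    (coeff (R := ZMod 2) d) (Pp M * gb (M+K) K) = if d = 0 then 1 else 0 := by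
  intro M
  induction M with
  | zero =>
    intro K d hd
    rw [Pp_zero, one_mul, show 0 + K = K by omega, gb_self, PowerSeries.coeff_one]
  | succ M ihM =>
    intro K
    induction K with
    | zero =>
      intro d hd
      have hd0 : d = 0 := by omega
      subst hd0
      rw [gb_zero, mul_one, Pp_const, if_pos rfl]
    | succ K ihK =>
      intro d hd
      have hfirst : (coeff (R := ZMod 2) d) ((Pp (M+1) * gb (M+1+K) K) * X^(M+1))
          = if d = M+1 then 1 else 0 := by
        rw [PowerSeries.coeff_mul_X_pow']
        split_ifs with h1 h2 h2
        · rw [ihK (d - (M+1)) (by omega), if_pos (by omega)]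
        · rw [ihK (d - (M+1)) (by omega), if_neg (by omega)]
        · omega
        · rfl
      have hsecond : (coeff (R := ZMod 2) d) (Pp (M+1) * gb (M+(K+1)) (K+1))
          = (if d = 0 then 1 else 0) + (if d = M+1 then 1 else 0) := by
        rw [Pp_succ, show (Pp M * (1+X^(M+1))) * gb (M+(K+1)) (K+1)
            = Pp M * gb (M+(K+1)) (K+1) + (Pp M * gb (M+(K+1)) (K+1)) * X^(M+1) by ring,
          map_add, ihM (K+1) d (by omega), PowerSeries.coeff_mul_X_pow']
        congr 1
        split_ifs with h1 h2 h2
        · rw [ihM (K+1) (d - (M+1)) (by omega), if_pos (by omega)]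
        · rw [ihM (K+1) (d - (M+1)) (by omega), if_neg (by omega)]
        · omega
        · rfl
      have hp : gb ((M+K+1)+1) (K+1) = X^(M+1) * gb (M+K+1) K + gb (M+K+1) (K+1) := by
        have h := gb_pascal' (M+K+1) K
        rw [show (M+K+1)-K = M+1 by omega] at h
        exact h
      rw [show M+1+(K+1) = (M+K+1)+1 by omega, hp, mul_add, map_add,
        show Pp (M+1) * (X^(M+1) * gb (M+K+1) K) = (Pp (M+1) * gb (M+1+K) K) * X^(M+1) by
          rw [show M+K+1 = M+1+K by omega]; ring,
        show Pp (M+1) * gb (M+K+1) (K+1) = Pp (M+1) * gb (M+(K+1)) (K+1) by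
          rw [show M+K+1 = M+(K+1) by omega],
        hfirst, hsecond]
      split_ifs <;> decide

lemma coeff_mul_delta (A D : S2) (d : ℕ)
    (hD : ∀ e, e ≤ d → (coeff (R := ZMod 2) e) D = if e = 0 then 1 else 0) :
    (coeff (R := ZMod 2) d) (A * D) = (coeff (R := ZMod 2) d) A := by
  rw [PowerSeries.coeff_mul]
  rw [Finset.sum_eq_single (d, 0)]
  · rw [hD 0 (by omega), if_pos rfl, mul_one]
  · intro p hp hne
    have hmem := Finset.HasAntidiagonal.mem_antidiagonal.mp hp
    have hp2 : p.2 ≠ 0 := by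
      intro h
      apply hne
      have : p.1 = d := by omega
      exact Prod.ext this h
    rw [hD p.2 (by omega), if_neg hp2, mul_zero]
  · intro h
    exact absurd (Finset.HasAntidiagonal.mem_antidiagonal.mpr (by omega)) h

lemma Dex_coeff (s N : ℕ) : ∀ e, e ≤ N →
    (coeff (R := ZMod 2) e) (∏ k ∈ Finset.range s, (1 + X^(N+k+1))) = if e = 0 then 1 else 0 := by
  induction s with
  | zero => intro e he; rw [Finset.prod_range_zero, PowerSeries.coeff_one]
  | succ s ih =>
    intro e he
    rw [Finset.prod_range_succ,
      show (∏ k ∈ Finset.range s, ((1:S2) + X^(N+k+1))) * ((1:S2) + X^(N+s+1))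
        = (∏ k ∈ Finset.range s, ((1:S2) + X^(N+k+1)))
          + (∏ k ∈ Finset.range s, ((1:S2) + X^(N+k+1))) * X^(N+s+1) by ring,
      map_add, PowerSeries.coeff_mul_X_pow', if_neg (by omega), add_zero]
    exact ih e he

lemma key_core (N d s : ℕ) (hs : s ≤ N) (hd : d ≤ N - s) :
    (coeff (R := ZMod 2) d) (Pp N * gb (2*N) (N - s)) = if d = 0 then 1 else 0 := by
  have hsplitP : Pp (N + s) = Pp N * ∏ k ∈ Finset.range s, ((1:S2) + X^(N+k+1)) := by
    unfold Pp
    rw [Finset.prod_range_add]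
  have hblem := blem (N+s) (N-s) d hd
  rw [show (N+s) + (N-s) = 2*N by omega] at hblem
  rw [← coeff_mul_delta (Pp N * gb (2*N) (N - s))
      (∏ k ∈ Finset.range s, ((1:S2) + X^(N+k+1))) d
      (fun e he => Dex_coeff s N e (by omega)),
    show (Pp N * gb (2*N) (N - s)) * (∏ k ∈ Finset.range s, ((1:S2) + X^(N+k+1)))
      = Pp (N+s) * gb (2*N) (N-s) by rw [hsplitP]; ring]
  exact hblem

lemma key_coeff (N j d : ℕ) (hj : j ≤ 2*N)
    (hd : d + (if N ≤ j then j - N else N - j) ≤ N) :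
    (coeff (R := ZMod 2) d) (Pp N * gb (2*N) j) = if d = 0 then 1 else 0 := by
  by_cases h : N ≤ j
  · rw [if_pos h] at hd
    have hc := key_core N d (j - N) (by omega) (by omega)
    rw [show N - (j - N) = 2*N - j by omega] at hc
    rw [gb_symm (2*N) j hj]
    exact hc
  · rw [if_neg h] at hd
    have hc := key_core N d (N - j) (by omega) (by omega)
    rw [show N - (N - j) = j by omega] at hc
    exact hc
lemma coeff_term (n i : ℕ) (hi : i < n+1) :
    (coeff (R := ZMod 2) n) ((Pp (n+1) * gb (2*(n+1)) (2*i+1)) * X^(uu (n+1) (2*i+1)))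
      = if uu (n+1) (2*i+1) = n then 1 else 0 := by
  rw [PowerSeries.coeff_mul_X_pow']
  by_cases hu : uu (n+1) (2*i+1) ≤ n
  · rw [if_pos hu]
    have harg : (n - uu (n+1) (2*i+1)) + (if n+1 ≤ 2*i+1 then 2*i+1 - (n+1) else (n+1) - (2*i+1)) ≤ n+1 := by
      by_cases h : n+1 ≤ 2*i+1
      · have hu0 : uu (n+1) (2*i+1) = tri (2*i+1 - (n+1)) := by
          rw [uu, if_pos h]
        have hle := le_tri (2*i+1 - (n+1))
        rw [if_pos h]
        omega
      · have hu0 : uu (n+1) (2*i+1) = tri ((n+1) - 1 - (2*i+1)) := by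
          rw [uu, if_neg h]
        have hle := le_tri ((n+1) - 1 - (2*i+1))
        rw [if_neg h]
        omega
    rw [key_coeff (n+1) (2*i+1) (n - uu (n+1) (2*i+1)) (by omega) harg]
    by_cases h0 : uu (n+1) (2*i+1) = n
    · rw [if_pos (by omega), if_pos h0]
    · rw [if_neg (by omega), if_neg h0]
  · rw [if_neg hu, if_neg (by omega)]

lemma count (n : ℕ) :
    (∑ i ∈ Finset.range (n+1), (if uu (n+1) (2*i+1) = n then (1:ZMod 2) else 0))
      = if (∃ j : ℕ, n*2 = j*(j+1)) then 1 else 0 := by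
  by_cases hex : ∃ s, tri s = n
  · obtain ⟨s, hs⟩ := hex
    rw [if_pos ⟨s, by rw [← hs, tri_mul_two]⟩]
    have hsle : s ≤ n := hs ▸ le_tri s
    have hs2 : 2*s ≤ n + 1 := by have := two_mul_le_tri s; omega
    have key : ∀ i0 : ℕ, i0 ∈ Finset.range (n+1) →
        (∀ i ∈ Finset.range (n+1), (uu (n+1) (2*i+1) = n ↔ i = i0)) →
        (∑ i ∈ Finset.range (n+1), (if uu (n+1) (2*i+1) = n then (1:ZMod 2) else 0)) = 1 := by
      intro i0 hmem hiff
      rw [Finset.sum_congr rfl (fun i hi => if_congr (hiff i hi) rfl rfl),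
        Finset.sum_ite_eq' (Finset.range (n+1)) i0 (fun _ => (1:ZMod 2)), if_pos hmem]
    rcases Nat.even_or_odd (n + s) with ⟨t, ht⟩ | ⟨t, ht⟩
    · -- n + s = t + t : solution j = (n+1)+s, i0 = t
      apply key t (Finset.mem_range.mpr (by omega))
      intro i hi
      have hmem := Finset.mem_range.mp hi
      unfold uu
      split_ifs with h
      · rw [show tri (2*i+1-(n+1)) = n ↔ 2*i+1-(n+1) = s from
          ⟨fun hh => tri_inj (hh.trans hs.symm), fun hh => by rw [hh, hs]⟩]
        omega
      · rw [show tri (n+1-1-(2*i+1)) = n ↔ n+1-1-(2*i+1) = s from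
          ⟨fun hh => tri_inj (hh.trans hs.symm), fun hh => by rw [hh, hs]⟩]
        omega
    · -- n + s = 2*t+1 : solution j = (n+1)-1-s, i0 = t - s
      apply key (t - s) (Finset.mem_range.mpr (by omega))
      intro i hi
      have hmem := Finset.mem_range.mp hi
      unfold uu
      split_ifs with h
      · rw [show tri (2*i+1-(n+1)) = n ↔ 2*i+1-(n+1) = s from
          ⟨fun hh => tri_inj (hh.trans hs.symm), fun hh => by rw [hh, hs]⟩]
        omega
      · rw [show tri (n+1-1-(2*i+1)) = n ↔ n+1-1-(2*i+1) = s from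
          ⟨fun hh => tri_inj (hh.trans hs.symm), fun hh => by rw [hh, hs]⟩]
        omega
  · rw [if_neg, Finset.sum_eq_zero]
    · intro i _
      rw [if_neg]
      intro hcon
      apply hex
      unfold uu at hcon
      split_ifs at hcon
      · exact ⟨_, hcon⟩
      · exact ⟨_, hcon⟩
    · rintro ⟨j, hj⟩
      apply hex
      refine ⟨j, ?_⟩
      have := tri_mul_two j
      omega

lemma hsub_lemma (m : ℕ) : ((1:S2) - X^(m+1)) = 1 + X^(m+1) := by
  have h0 : (X:S2)^(m+1) + X^(m+1) = 0 := by
    have htwo := S2.two_eq_zero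
    linear_combination (X^(m+1) : S2) * htwo
  have hneg : -((X:S2)^(m+1)) = X^(m+1) := neg_eq_of_add_eq_zero_left h0
  rw [sub_eq_add_neg, hneg]

end JacobiAux

/-- Jacobi's identity mod 2: the coefficient of `q^n` in `(∏_{k≥1}(1-q^k))^3`
over `ZMod 2` is `1` exactly when `n` is a triangular number `j(j+1)/2`. -/
theorem jacobi_mod_two :
    ∀ n : ℕ, PowerSeries.coeff (R := ZMod 2) n ((f 1) ^ 3) =
      if ∃ j : ℕ, n * 2 = j * (j + 1) then 1 else 0 := by
  intro n
  have hf : ∀ m : ℕ, (coeff (R := ZMod 2) m) (f 1) = (coeff (R := ZMod 2) m) (Pp (m+1)) := by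
    intro m
    rw [show f 1 = PowerSeries.mk fun k =>
        (coeff (R := ZMod 2) k) (∏ j ∈ Finset.range (k+1), (1 - X^(1*(j+1)))) from rfl,
      PowerSeries.coeff_mk]
    congr 1
    rw [show Pp (m+1) = ∏ k ∈ Finset.range (m+1), ((1:S2) + X^(k+1)) from rfl]
    apply Finset.prod_congr rfl
    intro k _
    rw [one_mul, hsub_lemma k]
  have hstab : ∀ (m A B : ℕ), m < A → A ≤ B →
      (coeff (R := ZMod 2) m) (Pp A) = (coeff (R := ZMod 2) m) (Pp B) := by
    intro m A B hm hAB
    induction B with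
    | zero => have h0 : A = 0 := by omega
              rw [h0]
    | succ B ih =>
      rcases Nat.lt_or_ge B A with h | h
      · have h0 : A = B+1 := by omega
        rw [h0]
      · rw [ih h, Pp_succ, show Pp B * ((1:S2)+X^(B+1)) = Pp B + Pp B * X^(B+1) by ring,
          map_add, PowerSeries.coeff_mul_X_pow', if_neg (by omega), add_zero]
  have hdvd : (X:S2)^(n+1) ∣ (f 1 - Pp (n+1)) := by
    rw [PowerSeries.X_pow_dvd_iff]
    intro m hm
    rw [map_sub, hf m, hstab m (m+1) (n+1) (by omega) (by omega), sub_self]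
  have hcube : (coeff (R := ZMod 2) n) ((f 1)^3) = (coeff (R := ZMod 2) n) ((Pp (n+1))^3) := by
    obtain ⟨c, hc⟩ := hdvd
    have hfc : f 1 = Pp (n+1) + X^(n+1) * c := by linear_combination hc
    have hdiff : (f 1)^3 - (Pp (n+1))^3
        = (c * ((f 1)^2 + (f 1)*(Pp (n+1)) + (Pp (n+1))^2)) * X^(n+1) := by
      rw [hfc]; ring
    have hz : (coeff (R := ZMod 2) n) ((f 1)^3 - (Pp (n+1))^3) = 0 := by
      rw [hdiff, PowerSeries.coeff_mul_X_pow', if_neg (by omega)]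
    rw [map_sub] at hz
    exact sub_eq_zero.mp hz
  rw [hcube]
  have hO := (OEeq n).1
  have hPs : Pp (n+1) = Pp n * (1 + X^(n+1)) := Pp_succ n
  have hexpand : (Pp (n+1))^3
      = Pp (n+1) * Os (n+1) + (Pp (n+1) * Pp (n+1) * Pp n) * X^(n+1) := by
    rw [hO]
    linear_combination (Pp (n+1)^2) * hPs
  rw [hexpand, map_add, PowerSeries.coeff_mul_X_pow', if_neg (by omega), add_zero]
  have hsum : Pp (n+1) * Os (n+1)
      = ∑ i ∈ Finset.range (n+1), (Pp (n+1) * gb (2*(n+1)) (2*i+1)) * X^(uu (n+1) (2*i+1)) := by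
    rw [show Os (n+1) = ∑ i ∈ Finset.range (n+1), tm (n+1) (2*i+1) from rfl, Finset.mul_sum]
    apply Finset.sum_congr rfl
    intro i _
    rw [tm]
    ring
  rw [hsum, map_sum,
    Finset.sum_congr rfl (fun i hi => coeff_term n i (Finset.mem_range.mp hi))]
  exact count n
end

section
/- Let m be a positive integer coprime to 6 and let B be a residue class modulo m. If 2·3^{-1}·B + 36^{-1} (inverses taken modulo m) is not a quadratic residue modulo m, then the coefficient of q^n in ∏_{k≥1}(1-q^k) is even for every n ≡ B (mod m). -/
open Finset

/-- generalized pentagonal predicate -/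
def Pent (n : ℕ) : Prop := ∃ k : ℕ, 2 * n + k = 3 * k * k ∨ 2 * n = 3 * k * k + k

/-- distinct partitions of `n` as finsets -/
def D (n : ℕ) : Finset (Finset ℕ) :=
  ((Finset.range (n + 1)).powerset).filter (fun S => (∑ x ∈ S, x) = n ∧ 0 ∉ S)

lemma mem_D {n : ℕ} {S : Finset ℕ} : S ∈ D n ↔ (∑ x ∈ S, x) = n ∧ 0 ∉ S := by
  constructor
  · intro h; exact (Finset.mem_filter.mp h).2
  · intro h
    refine Finset.mem_filter.mpr ⟨Finset.mem_powerset.mpr ?_, h⟩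
    intro x hx
    have hle : x ≤ ∑ y ∈ S, y := Finset.single_le_sum (f := fun y => y) (fun i _ => Nat.zero_le _) hx
    rw [h.1] at hle
    exact Finset.mem_range.mpr (Nat.lt_succ_of_le hle)

lemma frank_ex (S : Finset ℕ) (h : S.Nonempty ∧ 0 ∉ S) : ∃ k, S.max' h.1 - k ∉ S :=
  ⟨S.max' h.1, by simpa using h.2⟩

/-- Franklin's involution -/
def frank (S : Finset ℕ) : Finset ℕ :=
  if h : S.Nonempty ∧ 0 ∉ S then
    if S.min' h.1 ≤ Nat.find (frank_ex S h) then
      insert (S.max' h.1 + 1) ((S.erase (S.min' h.1)).erase (S.max' h.1 + 1 - S.min' h.1))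
    else
      insert (Nat.find (frank_ex S h))
        (insert (S.max' h.1 - Nat.find (frank_ex S h)) (S.erase (S.max' h.1)))
  else S

lemma max'_eq {S : Finset ℕ} (h : S.Nonempty) {x : ℕ} (hx : x ∈ S) (hub : ∀ y ∈ S, y ≤ x) :
    S.max' h = x :=
  le_antisymm (Finset.max'_le _ _ _ hub) (Finset.le_max' _ _ hx)

lemma min'_eq {S : Finset ℕ} (h : S.Nonempty) {x : ℕ} (hx : x ∈ S) (hlb : ∀ y ∈ S, x ≤ y) :
    S.min' h = x :=
  le_antisymm (Finset.min'_le _ _ hx) (Finset.le_min' _ _ _ hlb)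

lemma sum_Icc_helper (a c : ℕ) : (∑ x ∈ Finset.Icc a (a + c), x) * 2 = (2 * a + c) * (c + 1) := by
  induction c with
  | zero => simp; ring
  | succ c ih =>
    rw [show a + (c+1) = (a+c)+1 by omega, Finset.sum_Icc_succ_top (by omega)]
    ring_nf
    ring_nf at ih
    omega

lemma frank_eq1 (S : Finset ℕ) (h : S.Nonempty ∧ 0 ∉ S)
    (hc : S.min' h.1 ≤ Nat.find (frank_ex S h)) :
    frank S = insert (S.max' h.1 + 1)
      ((S.erase (S.min' h.1)).erase (S.max' h.1 + 1 - S.min' h.1)) := by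
  unfold frank; rw [dif_pos h, if_pos hc]

lemma frank_eq2 (S : Finset ℕ) (h : S.Nonempty ∧ 0 ∉ S)
    (hc : ¬ (S.min' h.1 ≤ Nat.find (frank_ex S h))) :
    frank S = insert (Nat.find (frank_ex S h))
      (insert (S.max' h.1 - Nat.find (frank_ex S h)) (S.erase (S.max' h.1))) := by
  unfold frank; rw [dif_pos h, if_neg hc]

lemma frank_spec {n : ℕ} (hnp : ¬ Pent n) {S : Finset ℕ} (hS : S ∈ D n) :
    frank S ∈ D n ∧ frank (frank S) = S ∧
      ((frank S).card + 1 = S.card ∨ (frank S).card = S.card + 1) := by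
  obtain ⟨hsum, h0⟩ := mem_D.mp hS
  have hne : S.Nonempty := by
    rcases S.eq_empty_or_nonempty with rfl | h
    · refine absurd ⟨0, Or.inl ?_⟩ hnp
      simp only [Finset.sum_empty] at hsum
      omega
    · exact h
  have h : S.Nonempty ∧ 0 ∉ S := ⟨hne, h0⟩
  set a := S.min' h.1 with ha_def
  set M := S.max' h.1 with hM_def
  set σ := Nat.find (frank_ex S h) with hσ_def
  have haS : a ∈ S := S.min'_mem h.1
  have hMS : M ∈ S := S.max'_mem h.1
  have hxle : ∀ x ∈ S, x ≤ M := fun x hx => S.le_max' x hx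
  have hxge : ∀ x ∈ S, a ≤ x := fun x hx => S.min'_le x hx
  have h1x : ∀ x ∈ S, 1 ≤ x := by
    intro x hx
    rcases Nat.eq_zero_or_pos x with rfl | h'
    · exact absurd hx h0
    · exact h'
  have ha1 : 1 ≤ a := h1x a haS
  have haM : a ≤ M := hxle a haS
  have hstair : ∀ k, k < σ → M - k ∈ S := by
    intro k hk
    have := Nat.find_min (frank_ex S h) hk
    simpa using this
  have hMσ : M - σ ∉ S := Nat.find_spec (frank_ex S h)
  have hσ1 : 1 ≤ σ := by
    rcases Nat.eq_zero_or_pos σ with h' | h'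
    · rw [h'] at hMσ; simp at hMσ; exact absurd hMS hMσ
    · exact h'
  have hσM : σ ≤ M := Nat.find_le (by show M - M ∉ S; simpa using h0)
  have hinterval : ∀ x, a ≤ x → x ≤ M → M - x < σ → x ∈ S := by
    intro x _ hxM h'
    have hy := hstair (M - x) h'
    rwa [Nat.sub_sub_self hxM] at hy
  by_cases hle : a ≤ σ
  · -- Case 1 : remove smallest part, grow the top `a` parts
    set b := M + 1 - a with hb_def
    have hbS : b ∈ S := by
      have h' := hstair (a - 1) (by omega)
      have e : M - (a - 1) = b := by omega
      rwa [e] at h'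
    have hbM : b ≤ M := hxle b hbS
    have hab : a < b := by
      rcases lt_or_ge a b with h' | h'
      · exact h'
      exfalso
      have hba : a = b := le_antisymm (hxge b hbS) h'
      have hSI : S = Finset.Icc a M := by
        apply Finset.Subset.antisymm
        · intro x hx; exact Finset.mem_Icc.mpr ⟨hxge x hx, hxle x hx⟩
        · intro x hx
          have hx' := Finset.mem_Icc.mp hx
          exact hinterval x hx'.1 hx'.2 (by omega)
      have hs2 := sum_Icc_helper a (a - 1)
      have hM2 : M = a + (a - 1) := by omega
      rw [← hM2] at hs2
      rw [hSI] at hsum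
      apply hnp
      obtain ⟨s, hs⟩ : ∃ s, a = s + 1 := ⟨a - 1, by omega⟩
      refine ⟨s + 1, Or.inl ?_⟩
      rw [hsum, hs] at hs2
      have hs2' : n * 2 = (2 * (s + 1) + s) * (s + 1) := by simpa using hs2
      have e : (2 * (s + 1) + s) * (s + 1) + (s + 1) = 3 * (s + 1) * (s + 1) := by ring
      linarith [hs2', e]
    have hM1S : M + 1 ∉ S := fun hc => by have := hxle _ hc; omega
    set T := (S.erase a).erase b with hT_def
    have hbea : b ∈ S.erase a := Finset.mem_erase.mpr ⟨by omega, hbS⟩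
    have hT1 : insert b T = S.erase a := Finset.insert_erase hbea
    have hT2 : insert a (S.erase a) = S := Finset.insert_erase haS
    have hTmem : ∀ x, x ∈ T ↔ (x ∈ S ∧ x ≠ a ∧ x ≠ b) := by
      intro x
      simp only [hT_def, Finset.mem_erase]
      tauto
    have hM1T : M + 1 ∉ T := fun hc => hM1S ((hTmem _).mp hc).1
    have hfr : frank S = insert (M + 1) T := frank_eq1 S h hle
    set S' := insert (M + 1) T with hS'_def
    have hmemS' : ∀ x, x ∈ S' ↔ (x = M + 1 ∨ (x ∈ S ∧ x ≠ a ∧ x ≠ b)) := by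
      intro x
      simp only [hS'_def, Finset.mem_insert, hTmem]
    have hsum' : (∑ x ∈ S', x) = n := by
      have e1 : a + ∑ x ∈ S.erase a, x = ∑ x ∈ S, x := Finset.add_sum_erase S (fun x => x) haS
      have e2 : ∑ x ∈ S.erase a, x = b + ∑ x ∈ T, x := by
        rw [← hT1, Finset.sum_insert (Finset.notMem_erase b _)]
      have e3 : (∑ x ∈ S', x) = (M + 1) + ∑ x ∈ T, x := Finset.sum_insert hM1T
      omega
    have h0' : (0 : ℕ) ∉ S' := by
      intro hc
      rcases (hmemS' 0).mp hc with h' | h'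
      · omega
      · exact h0 h'.1
    have hmemD : S' ∈ D n := mem_D.mpr ⟨hsum', h0'⟩
    have hcard' : S'.card + 1 = S.card := by
      have e3 : S'.card = T.card + 1 := Finset.card_insert_of_notMem hM1T
      have c1 : (S.erase a).card + 1 = S.card := Finset.card_erase_add_one haS
      have c2 : T.card + 1 = (S.erase a).card := Finset.card_erase_add_one hbea
      omega
    have h' : S'.Nonempty ∧ 0 ∉ S' := ⟨⟨M + 1, Finset.mem_insert_self _ _⟩, h0'⟩
    have hmax' : S'.max' h'.1 = M + 1 := by
      apply max'_eq h'.1 (Finset.mem_insert_self _ _)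
      intro y hy
      rcases (hmemS' y).mp hy with rfl | hy'
      · exact le_rfl
      · have := hxle y hy'.1; omega
    have hfind' : Nat.find (frank_ex S' h') = a := by
      rw [Nat.find_eq_iff]
      constructor
      · rw [hmax']
        intro hc
        rcases (hmemS' _).mp hc with h'' | ⟨_, _, hne2⟩
        · omega
        · exact hne2 (by omega)
      · intro k hk
        rw [not_not, hmax']
        apply (hmemS' _).mpr
        rcases Nat.eq_zero_or_pos k with rfl | hk1
        · left; omega
        · right
          have hst := hstair (k - 1) (by omega)
          have e : M - (k - 1) = M + 1 - k := by omega
          rw [e] at hst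
          exact ⟨hst, by omega, by omega⟩
    have hnotle : ¬ (S'.min' h'.1 ≤ Nat.find (frank_ex S' h')) := by
      rw [hfind', not_le, Finset.lt_min'_iff]
      intro y hy
      rcases (hmemS' y).mp hy with rfl | ⟨hyS, hya, _⟩
      · omega
      · have := hxge y hyS; omega
    have hfr2 := frank_eq2 S' h' hnotle
    rw [hfind', hmax'] at hfr2
    have hrec : frank S' = S := by
      rw [hfr2]
      have e1 : S'.erase (M + 1) = T := Finset.erase_insert hM1T
      rw [e1, ← hb_def, hT1, hT2]
    refine ⟨by rw [hfr]; exact hmemD, by rw [hfr]; exact hrec, Or.inl (by rw [hfr]; exact hcard')⟩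
  · -- Case 2 : shrink the staircase, add a new smallest part
    push_neg at hle
    have hstairbot : M + 1 - σ ∈ S := by
      have h' := hstair (σ - 1) (by omega)
      have e : M - (σ - 1) = M + 1 - σ := by omega
      rwa [e] at h'
    have haσ : a ≤ M + 1 - σ := hxge _ hstairbot
    have hM2σ : 2 * σ < M := by
      rcases lt_or_ge (2 * σ) M with h' | h'
      · exact h'
      exfalso
      have hMe : M = 2 * σ := by omega
      have hae : a = σ + 1 := by omega
      have hSI : S = Finset.Icc a M := by
        apply Finset.Subset.antisymm
        · intro x hx; exact Finset.mem_Icc.mpr ⟨hxge x hx, hxle x hx⟩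
        · intro x hx
          have hx' := Finset.mem_Icc.mp hx
          exact hinterval x hx'.1 hx'.2 (by omega)
      have hs2 := sum_Icc_helper a (σ - 1)
      have hM2 : M = a + (σ - 1) := by omega
      rw [← hM2] at hs2
      rw [hSI] at hsum
      apply hnp
      obtain ⟨s, hs⟩ : ∃ s, σ = s + 1 := ⟨σ - 1, by omega⟩
      refine ⟨s + 1, Or.inr ?_⟩
      rw [hsum] at hs2
      have hae' : a = s + 2 := by omega
      rw [hs, hae'] at hs2
      have hs2' : n * 2 = (2 * (s + 2) + s) * (s + 1) := by simpa using hs2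
      have e : (2 * (s + 2) + s) * (s + 1) = 3 * (s + 1) * (s + 1) + (s + 1) := by ring
      linarith [hs2', e]
    set c := M - σ with hc_def
    have hcσ : σ < c := by omega
    have hσS : σ ∉ S := fun hc' => by have := hxge σ hc'; omega
    have hcS : c ∉ S := hMσ
    have hcM : c ∉ S.erase M := fun h' => hcS (Finset.mem_of_mem_erase h')
    have hσic : σ ∉ insert c (S.erase M) := by
      intro h'
      rcases Finset.mem_insert.mp h' with h'' | h''
      · omega
      · exact hσS (Finset.mem_of_mem_erase h'')
    have hfr : frank S = insert σ (insert c (S.erase M)) := frank_eq2 S h (by omega)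
    set S' := insert σ (insert c (S.erase M)) with hS'_def
    have hmemS' : ∀ x, x ∈ S' ↔ (x = σ ∨ x = c ∨ (x ∈ S ∧ x ≠ M)) := by
      intro x
      simp only [hS'_def, Finset.mem_insert, Finset.mem_erase]
      tauto
    have hsum' : (∑ x ∈ S', x) = n := by
      have e1 : M + ∑ x ∈ S.erase M, x = ∑ x ∈ S, x := Finset.add_sum_erase S (fun x => x) hMS
      have e2 : (∑ x ∈ S', x) = σ + (c + ∑ x ∈ S.erase M, x) := by
        rw [hS'_def, Finset.sum_insert hσic, Finset.sum_insert hcM]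
      omega
    have h0' : (0 : ℕ) ∉ S' := by
      intro hc'
      rcases (hmemS' 0).mp hc' with h'' | h'' | h''
      · omega
      · omega
      · exact h0 h''.1
    have hmemD : S' ∈ D n := mem_D.mpr ⟨hsum', h0'⟩
    have hcard' : S'.card = S.card + 1 := by
      have e3 : S'.card = (insert c (S.erase M)).card + 1 := Finset.card_insert_of_notMem hσic
      have e4 : (insert c (S.erase M)).card = (S.erase M).card + 1 :=
        Finset.card_insert_of_notMem hcM
      have c1 : (S.erase M).card + 1 = S.card := Finset.card_erase_add_one hMS
      omega
    have h' : S'.Nonempty ∧ 0 ∉ S' := ⟨⟨σ, Finset.mem_insert_self _ _⟩, h0'⟩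
    have hmax' : S'.max' h'.1 = M - 1 := by
      apply max'_eq h'.1
      · apply (hmemS' _).mpr
        rcases Nat.eq_zero_or_pos (σ - 1) with h'' | h''
        · right; left; omega
        · right; right
          have hst := hstair 1 (by omega)
          exact ⟨hst, by omega⟩
      · intro y hy
        rcases (hmemS' y).mp hy with rfl | rfl | ⟨hyS, hyM⟩
        · omega
        · omega
        · have := hxle y hyS; omega
    have hfindge : σ ≤ Nat.find (frank_ex S' h') := by
      rw [Nat.le_find_iff]
      intro k hk
      rw [not_not, hmax']
      apply (hmemS' _).mpr
      rcases Nat.lt_or_ge (k + 1) σ with h'' | h''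
      · right; right
        have hst := hstair (k + 1) h''
        have e : M - (k + 1) = M - 1 - k := by omega
        rw [e] at hst
        exact ⟨hst, by omega⟩
      · right; left; omega
    have hmin' : S'.min' h'.1 = σ := by
      apply min'_eq h'.1 (Finset.mem_insert_self _ _)
      intro y hy
      rcases (hmemS' y).mp hy with rfl | rfl | ⟨hyS, _⟩
      · exact le_rfl
      · omega
      · have := hxge y hyS; omega
    have hisle : S'.min' h'.1 ≤ Nat.find (frank_ex S' h') := by rw [hmin']; exact hfindge
    have hfr2 := frank_eq1 S' h' hisle
    rw [hmin', hmax'] at hfr2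
    have e5 : M - 1 + 1 = M := by omega
    rw [e5, ← hc_def] at hfr2
    have hrec : frank S' = S := by
      rw [hfr2]
      have e1 : S'.erase σ = insert c (S.erase M) := Finset.erase_insert hσic
      rw [e1, Finset.erase_insert hcM, Finset.insert_erase hMS]
    refine ⟨by rw [hfr]; exact hmemD, by rw [hfr]; exact hrec, Or.inr (by rw [hfr]; exact hcard')⟩

open PowerSeries

/-- `∏_{k≥1}(1-q^k)` as a formal power series over `ℤ`. -/
noncomputable def fZ : PowerSeries ℤ :=
  PowerSeries.mk fun n =>
    PowerSeries.coeff n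
      (∏ k ∈ Finset.range (n + 1), (1 - PowerSeries.X ^ (k + 1)))

/-- `c_1(n)`: the coefficient of `q^n` in `∏_{k≥1}(1-q^k)`. -/
noncomputable def c1 (n : ℕ) : ℤ := PowerSeries.coeff n fZ

lemma c1_eq (n : ℕ) : c1 n = ∑ S ∈ D n, (-1 : ℤ) ^ S.card := by
  unfold c1 fZ
  rw [PowerSeries.coeff_mk]
  have h1 : ∀ k ∈ Finset.range (n + 1),
      (1 - (PowerSeries.X : PowerSeries ℤ) ^ (k + 1)) = (-(X ^ (k + 1)) + 1) := fun k _ => by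
    ring
  rw [Finset.prod_congr rfl h1, Finset.prod_add]
  simp only [Finset.prod_const_one, mul_one]
  rw [map_sum]
  have h2 : ∀ t ∈ (Finset.range (n + 1)).powerset,
      (PowerSeries.coeff n) (∏ i ∈ t, -((X : PowerSeries ℤ) ^ (i + 1))) =
        if (∑ i ∈ t, (i + 1)) = n then (-1 : ℤ) ^ t.card else 0 := by
    intro t _
    have e : (∏ i ∈ t, -((X : PowerSeries ℤ) ^ (i + 1))) =
        C ((-1) ^ t.card) * X ^ (∑ i ∈ t, (i + 1)) := by
      calc ∏ i ∈ t, -((X : PowerSeries ℤ) ^ (i + 1))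
          = ∏ i ∈ t, ((-1) * (X : PowerSeries ℤ) ^ (i + 1)) := by
            apply Finset.prod_congr rfl; intros; ring
        _ = (∏ _i ∈ t, (-1 : PowerSeries ℤ)) * ∏ i ∈ t, (X : PowerSeries ℤ) ^ (i + 1) :=
            Finset.prod_mul_distrib
        _ = (-1) ^ t.card * X ^ (∑ i ∈ t, (i + 1)) := by
            rw [Finset.prod_const, Finset.prod_pow_eq_pow_sum]
        _ = C ((-1) ^ t.card) * X ^ (∑ i ∈ t, (i + 1)) := by
            rw [map_pow, map_neg, map_one]
    rw [e, PowerSeries.coeff_C_mul, PowerSeries.coeff_X_pow]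
    by_cases hcond : (∑ i ∈ t, (i + 1)) = n
    · rw [if_pos hcond, if_pos hcond.symm, mul_one]
    · rw [if_neg hcond, if_neg (fun hc => hcond hc.symm), mul_zero]
  rw [Finset.sum_congr rfl h2, ← Finset.sum_filter]
  refine Finset.sum_nbij' (fun t => t.image Nat.succ) (fun S => S.image (fun x => x - 1)) ?_ ?_ ?_ ?_ ?_
  · intro t ht
    simp only [Finset.mem_filter, Finset.mem_powerset] at ht
    apply mem_D.mpr
    constructor
    · rw [Finset.sum_image (fun x _ y _ hxy => Nat.succ_injective hxy)]
      simpa using ht.2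
    · simp
  · intro S hS
    obtain ⟨hs, h0⟩ := mem_D.mp hS
    have h1S : ∀ x ∈ S, 1 ≤ x := by
      intro x hx
      rcases Nat.eq_zero_or_pos x with rfl | h'
      · exact absurd hx h0
      · exact h'
    simp only [Finset.mem_filter, Finset.mem_powerset]
    constructor
    · intro y hy
      obtain ⟨x, hx, rfl⟩ := Finset.mem_image.mp hy
      have hxn : x ≤ ∑ y ∈ S, y := Finset.single_le_sum (f := fun y => y) (fun i _ => Nat.zero_le _) hx
      rw [hs] at hxn
      exact Finset.mem_range.mpr (by omega)
    · rw [Finset.sum_image (fun x hx y hy hxy => by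
        have := h1S x hx; have := h1S y hy; omega)]
      rw [← hs]
      apply Finset.sum_congr rfl
      intro x hx
      have := h1S x hx
      omega
  · intro t _
    show Finset.image (fun x => x - 1) (t.image Nat.succ) = t
    rw [Finset.image_image]
    have e : ((fun x => x - 1) ∘ Nat.succ) = id := funext fun x => rfl
    rw [e, Finset.image_id]
  · intro S hS
    obtain ⟨_, h0⟩ := mem_D.mp hS
    show Finset.image Nat.succ (S.image (fun x => x - 1)) = S
    rw [Finset.image_image]
    rw [Finset.image_congr (g := id) (fun x hx => by
      simp only [Function.comp_apply, id]
      rcases Nat.eq_zero_or_pos x with rfl | h'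
      · exact absurd hx h0
      · omega)]
    exact Finset.image_id
  · intro t _
    rw [Finset.card_image_of_injective _ Nat.succ_injective]

lemma c1_eq_zero_of_not_pent {n : ℕ} (hnp : ¬ Pent n) : c1 n = 0 := by
  rw [c1_eq]
  refine Finset.sum_involution (fun S _ => frank S) ?_ ?_
    (fun S hS => (frank_spec hnp hS).1) (fun S hS => (frank_spec hnp hS).2.1)
  · intro S hS
    rcases (frank_spec hnp hS).2.2 with h' | h'
    · rw [← h', pow_succ]; ring
    · rw [h', pow_succ]; ring
  · intro S hS _ heq
    have heq' : frank S = S := heq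
    rcases (frank_spec hnp hS).2.2 with h' | h' <;> rw [heq'] at h' <;> omega

lemma pent_of_not_even {n : ℕ} (h : ¬ (2 : ℤ) ∣ c1 n) : Pent n := by
  by_contra h'
  exact h (by rw [c1_eq_zero_of_not_pent h']; exact dvd_zero 2)

/-- If `m` is positive and coprime to 6, `B : ZMod m`, and `2·3⁻¹·B + 36⁻¹` is not a
quadratic residue mod `m`, then `c_1(n)` is even for every `n ≡ B (mod m)`. -/
theorem pentagonal_even_progression (m : ℕ) (hm : 0 < m) (hcop : Nat.Coprime m 6)
    (B : ZMod m)
    (hqr : ¬ ∃ x : ZMod m, x ^ 2 = 2 * (3 : ZMod m)⁻¹ * B + (36 : ZMod m)⁻¹) :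
    ∀ n : ℕ, (n : ZMod m) = B → (2 : ℤ) ∣ c1 n := by
  intro n hn
  by_contra hodd
  have hp : Pent n := pent_of_not_even hodd
  have h6 : IsUnit (6 : ZMod m) := by
    have := (ZMod.isUnit_iff_coprime 6 m).mpr hcop.symm
    simpa using this
  have h3 : IsUnit (3 : ZMod m) := by
    have hc3 : Nat.Coprime 3 m := Nat.Coprime.coprime_dvd_left (by norm_num) hcop.symm
    have := (ZMod.isUnit_iff_coprime 3 m).mpr hc3
    simpa using this
  have h36 : IsUnit (36 : ZMod m) := by
    have hc36 : Nat.Coprime 36 m := by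
      have := Nat.Coprime.mul hcop.symm hcop.symm
      simpa using this
    have := (ZMod.isUnit_iff_coprime 36 m).mpr hc36
    simpa using this
  have e6 : (6 : ZMod m)⁻¹ * 6 = 1 := ZMod.inv_mul_of_unit _ h6
  have e3 : (3 : ZMod m)⁻¹ * 3 = 1 := ZMod.inv_mul_of_unit _ h3
  have e36 : (36 : ZMod m) * (36 : ZMod m)⁻¹ = 1 := ZMod.mul_inv_of_unit _ h36
  have rhs36 : (36 : ZMod m) * (2 * (3 : ZMod m)⁻¹ * B + (36 : ZMod m)⁻¹) = 24 * B + 1 := by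
    have e : (36 : ZMod m) * (2 * (3 : ZMod m)⁻¹ * B + (36 : ZMod m)⁻¹) =
        24 * B * ((3 : ZMod m)⁻¹ * 3) + 36 * (36 : ZMod m)⁻¹ := by ring
    rw [e, e3, e36]; ring
  obtain ⟨k, hk | hk⟩ := hp
  · apply hqr
    have hc : 2 * B + (k : ZMod m) = 3 * k * k := by
      have hcast := congrArg (Nat.cast : ℕ → ZMod m) hk
      push_cast at hcast
      rw [hn] at hcast
      exact hcast
    refine ⟨(6 * (k : ZMod m) - 1) * (6 : ZMod m)⁻¹, ?_⟩
    have key : (6 * (k : ZMod m) - 1) ^ 2 = 24 * B + 1 := by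
      linear_combination (-12 : ZMod m) * hc
    have lhs36 : (36 : ZMod m) * ((6 * (k : ZMod m) - 1) * (6 : ZMod m)⁻¹) ^ 2 = 24 * B + 1 := by
      have e : (36 : ZMod m) * ((6 * (k : ZMod m) - 1) * (6 : ZMod m)⁻¹) ^ 2 =
          (6 * (k : ZMod m) - 1) ^ 2 * (((6 : ZMod m)⁻¹ * 6) * ((6 : ZMod m)⁻¹ * 6)) := by ring
      rw [e, e6, mul_one, mul_one, key]
    exact h36.mul_left_cancel (lhs36.trans rhs36.symm)
  · apply hqr
    have hc : 2 * B = 3 * (k : ZMod m) * k + k := by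
      have hcast := congrArg (Nat.cast : ℕ → ZMod m) hk
      push_cast at hcast
      rw [hn] at hcast
      exact hcast
    refine ⟨(6 * (k : ZMod m) + 1) * (6 : ZMod m)⁻¹, ?_⟩
    have key : (6 * (k : ZMod m) + 1) ^ 2 = 24 * B + 1 := by
      linear_combination (-12 : ZMod m) * hc
    have lhs36 : (36 : ZMod m) * ((6 * (k : ZMod m) + 1) * (6 : ZMod m)⁻¹) ^ 2 = 24 * B + 1 := by
      have e : (36 : ZMod m) * ((6 * (k : ZMod m) + 1) * (6 : ZMod m)⁻¹) ^ 2 =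
          (6 * (k : ZMod m) + 1) ^ 2 * (((6 : ZMod m)⁻¹ * 6) * ((6 : ZMod m)⁻¹ * 6)) := by ring
      rw [e, e6, mul_one, mul_one, key]
    exact h36.mul_left_cancel (lhs36.trans rhs36.symm)
end

section
/- For every positive integer d, the first 2^d coefficients of f_1^{2^d - 1} agree modulo 2 with the partition numbers: c_{2^d-1}(n) ≡ p(n) (mod 2) for all 0 ≤ n ≤ 2^d - 1. -/
open PowerSeries Finset
open scoped Classical

noncomputable section EulerAux

variable {α : Type*}

/-- Power series whose coefficients indicate a subset. -/
def indicatorSeries (α : Type*) [Semiring α] (s : Set ℕ) : PowerSeries α :=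
  PowerSeries.mk fun n => if n ∈ s then 1 else 0

theorem coeff_indicator (s : Set ℕ) [Semiring α] (n : ℕ) :
    coeff n (indicatorSeries α s) = if n ∈ s then 1 else 0 :=
  coeff_mk _ _

-- The main workhorse (copied from Archive/Wiedijk100Theorems/Partition.lean).
theorem partialGF_prop (α : Type*) [CommSemiring α] (n : ℕ) (s : Finset ℕ) (hs : ∀ i ∈ s, 0 < i)
    (cs : ℕ → Set ℕ) (hc : ∀ i, i ∉ s → 0 ∈ cs i) :
    #{p : n.Partition | (∀ j, p.parts.count j ∈ cs j) ∧ ∀ j ∈ p.parts, j ∈ s} =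
      coeff n (∏ i ∈ s, indicatorSeries α ((· * i) '' cs i)) := by
  simp_rw [coeff_prod, coeff_indicator, prod_boole, sum_boole]
  apply congr_arg
  simp only [mem_univ, forall_true_left, not_and, not_forall, exists_prop,
    Set.mem_image, not_exists]
  set φ : (a : Nat.Partition n) →
    a ∈ filter (fun p ↦ (∀ (j : ℕ), Multiset.count j p.parts ∈ cs j) ∧ ∀ j ∈ p.parts, j ∈ s) univ →
    ℕ →₀ ℕ := fun p _ => {
      toFun := fun i => Multiset.count i p.parts • i
      support := Finset.filter (fun i => i ≠ 0) p.parts.toFinset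
      mem_support_toFun := fun a => by
        simp only [smul_eq_mul, ne_eq, mul_eq_zero, Multiset.count_eq_zero]
        rw [not_or, not_not]
        simp only [Multiset.mem_toFinset, not_not, mem_filter] }
  refine Finset.card_bij φ ?_ ?_ ?_
  · intro a ha
    simp only [φ, not_forall, not_exists, not_and, exists_prop, mem_filter]
    rw [mem_finsuppAntidiag]
    dsimp only [ne_eq, smul_eq_mul, id_eq, eq_mpr_eq_cast, le_eq_subset, Finsupp.coe_mk]
    simp only [mem_univ, forall_true_left, not_and, not_forall, exists_prop,
      mem_filter, true_and] at ha
    refine ⟨⟨?_, fun i ↦ ?_⟩, fun i _ ↦ ⟨a.parts.count i, ha.1 i, rfl⟩⟩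
    · conv_rhs => simp [← a.parts_sum]
      rw [sum_multiset_count_of_subset _ s]
      · simp only [smul_eq_mul]
      · intro i
        simp only [Multiset.mem_toFinset, not_not, mem_filter]
        apply ha.2
    · simp only [ne_eq, Multiset.mem_toFinset, not_not, mem_filter, and_imp]
      exact fun hi _ ↦ ha.2 i hi
  · intro p₁ hp₁ p₂ hp₂ h
    apply Nat.Partition.ext
    simp only [true_and, mem_univ, mem_filter] at hp₁ hp₂
    ext i
    simp only [φ, ne_eq, Multiset.mem_toFinset, not_not, smul_eq_mul, Finsupp.mk.injEq] at h
    by_cases hi : i = 0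
    · rw [hi]
      rw [Multiset.count_eq_zero_of_notMem]
      · rw [Multiset.count_eq_zero_of_notMem]
        intro a; exact Nat.lt_irrefl 0 (hs 0 (hp₂.2 0 a))
      intro a; exact Nat.lt_irrefl 0 (hs 0 (hp₁.2 0 a))
    · rw [← mul_left_inj' hi]
      rw [funext_iff] at h
      exact h.2 i
  · simp only [φ, mem_filter, mem_finsuppAntidiag, mem_univ, exists_prop, true_and, and_assoc]
    rintro f ⟨hf, hf₃, hf₄⟩
    have hf' : f ∈ finsuppAntidiag s n := mem_finsuppAntidiag.mpr ⟨hf, hf₃⟩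
    simp only [mem_finsuppAntidiag] at hf'
    refine ⟨⟨∑ i ∈ s, Multiset.replicate (f i / i) i, ?_, ?_⟩, ?_, ?_, ?_⟩
    · intro i hi
      simp only [exists_prop, Multiset.mem_sum, mem_map, Function.Embedding.coeFn_mk] at hi
      rcases hi with ⟨t, ht, z⟩
      apply hs
      rwa [Multiset.eq_of_mem_replicate z]
    · simp_rw [Multiset.sum_sum, Multiset.sum_replicate, Nat.nsmul_eq_mul]
      rw [← hf'.1]
      refine sum_congr rfl fun i hi => Nat.div_mul_cancel ?_
      rcases hf₄ i hi with ⟨w, _, hw₂⟩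
      rw [← hw₂]
      exact dvd_mul_left _ _
    · intro i
      simp_rw [Multiset.count_sum', Multiset.count_replicate, sum_ite_eq']
      split_ifs with h
      · rcases hf₄ i h with ⟨w, hw₁, hw₂⟩
        rwa [← hw₂, Nat.mul_div_cancel _ (hs i h)]
      · exact hc _ h
    · intro i hi
      rw [Multiset.mem_sum] at hi
      rcases hi with ⟨j, hj₁, hj₂⟩
      rwa [Multiset.eq_of_mem_replicate hj₂]
    · ext i
      simp_rw [Multiset.count_sum', Multiset.count_replicate, sum_ite_eq']
      simp only [ne_eq, Multiset.mem_toFinset, not_not, smul_eq_mul, ite_mul,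
        zero_mul, Finsupp.coe_mk]
      split_ifs with h
      · apply Nat.div_mul_cancel
        rcases hf₄ i h with ⟨w, _, hw₂⟩
        apply Dvd.intro_left _ hw₂
      · apply symm
        rw [← Finsupp.notMem_support_iff]
        exact notMem_mono hf'.2 h

-- indicator of multiples of (j+1) is inverse of 1 - X^(j+1)
theorem ind_mul_one_sub (j : ℕ) :
    indicatorSeries ℤ {k | (j + 1) ∣ k} * (1 - X ^ (j + 1)) = 1 := by
  ext n
  rw [mul_sub, mul_one, map_sub, coeff_indicator, coeff_mul_X_pow', coeff_indicator]
  rcases n with _ | n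
  · simp
  · have h1 : ¬ ((n + 1 : ℕ) = 0) := by omega
    simp only [coeff_one, h1, if_false, Set.mem_setOf_eq]
    by_cases hle : j + 1 ≤ n + 1
    · rw [if_pos hle]
      have : (j + 1) ∣ (n + 1) ↔ (j + 1) ∣ (n + 1 - (j + 1)) := by
        constructor
        · intro h; exact (Nat.dvd_sub h dvd_rfl)
        · intro h
          have := Nat.dvd_add h (dvd_refl (j + 1))
          rwa [Nat.sub_add_cancel hle] at this
      by_cases hd : (j + 1) ∣ (n + 1)
      · rw [if_pos hd, if_pos (this.mp hd), sub_self]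
      · rw [if_neg hd, if_neg (fun hh => hd (this.mpr hh)), sub_self]
    · rw [if_neg hle]
      have hd : ¬ (j + 1) ∣ (n + 1) := by
        intro h
        exact hle (Nat.le_of_dvd (Nat.succ_pos n) h)
      simp [hd]

-- the number of partitions of n equals coeff n of the finite product of indicators, for n ≤ m
theorem card_partition_eq_coeff (n m : ℕ) (h : n ≤ m) :
    (Fintype.card (Nat.Partition n) : ℤ) =
      coeff n (∏ i ∈ range (m + 1), indicatorSeries ℤ {k | (i + 1) ∣ k}) := by
  have := partialGF_prop ℤ n ((range (m + 1)).map ⟨Nat.succ, Nat.succ_injective⟩)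
    (by rintro i hi; simp only [mem_map, Function.Embedding.coeFn_mk] at hi
        obtain ⟨a, -, rfl⟩ := hi; exact Nat.succ_pos a)
    (fun _ => Set.univ) (fun _ _ => trivial)
  rw [Finset.prod_map] at this
  have himg : ∀ i : ℕ, ((· * (i + 1)) '' (Set.univ : Set ℕ)) = {k | (i + 1) ∣ k} := by
    intro i
    ext k
    simp only [Set.image_univ, Set.mem_range, Set.mem_setOf_eq]
    constructor
    · rintro ⟨a, rfl⟩; exact Dvd.intro_left a rfl
    · rintro ⟨a, rfl⟩; exact ⟨a, mul_comm a (i+1)⟩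
  have heq : (∏ i ∈ range (m + 1),
      indicatorSeries ℤ ((· * ((⟨Nat.succ, Nat.succ_injective⟩ : ℕ ↪ ℕ) i)) ''
        ((fun _ => Set.univ) i))) =
      ∏ i ∈ range (m + 1), indicatorSeries ℤ {k | (i + 1) ∣ k} := by
    apply Finset.prod_congr rfl
    intro i _
    exact congrArg (indicatorSeries ℤ) (himg i)
  rw [heq] at this
  rw [← this]
  norm_cast
  rw [Fintype.card]
  congr 1
  symm
  apply Finset.filter_true_of_mem
  intro p _
  refine ⟨fun j => trivial, fun j hj => ?_⟩
  simp only [mem_map, mem_range, Function.Embedding.coeFn_mk]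
  have hj1 : 0 < j := p.parts_pos hj
  have hjn : j ≤ n := by
    simpa [p.parts_sum] using Multiset.single_le_sum (fun _ _ => Nat.zero_le _) _ hj
  exact ⟨j - 1, by omega, by omega⟩


end EulerAux

noncomputable def c (t n : ℕ) : ℤ := PowerSeries.coeff n (fZ ^ t)

noncomputable def Pgf : PowerSeries ℤ :=
  PowerSeries.mk fun n => (Fintype.card (Nat.Partition n) : ℤ)

-- stabilization
theorem coeff_fZ_eq (n m : ℕ) (h : n ≤ m) :
    PowerSeries.coeff n (∏ k ∈ Finset.range (m + 1), (1 - PowerSeries.X ^ (k + 1)))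
      = PowerSeries.coeff n fZ := by
  induction m, h using Nat.le_induction with
  | base => rw [fZ, coeff_mk]
  | succ m hm ih =>
    rw [Finset.prod_range_succ, mul_sub, mul_one, map_sub, coeff_mul_X_pow',
      if_neg (by omega), sub_zero, ih]

-- Euler's identity
theorem Pgf_mul_fZ : Pgf * fZ = 1 := by
  ext n
  rw [coeff_mul]
  have key : ∀ p ∈ Finset.HasAntidiagonal.antidiagonal n,
      coeff p.1 Pgf * coeff p.2 fZ =
        coeff p.1 (∏ i ∈ range (n + 1), indicatorSeries ℤ {k | (i + 1) ∣ k}) *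
          coeff p.2 (∏ k ∈ range (n + 1), (1 - X ^ (k + 1))) := by
    rintro ⟨a, b⟩ hab
    rw [Finset.HasAntidiagonal.mem_antidiagonal] at hab
    dsimp only
    rw [Pgf, coeff_mk, card_partition_eq_coeff a n (by omega), coeff_fZ_eq b n (by omega)]
  rw [Finset.sum_congr rfl key, ← coeff_mul, ← Finset.prod_mul_distrib]
  have : ∀ i ∈ range (n + 1),
      indicatorSeries ℤ {k | (i + 1) ∣ k} * (1 - X ^ (i + 1)) = 1 := fun i _ => ind_mul_one_sub i
  rw [Finset.prod_congr rfl this, Finset.prod_const_one]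

-- char 2 square coefficient lemma
theorem coeff_sq_char2 (G : PowerSeries (ZMod 2)) (n : ℕ) :
    PowerSeries.coeff n (G ^ 2) =
      if 2 ∣ n then (PowerSeries.coeff (n / 2) G) ^ 2 else 0 := by
  rw [sq, coeff_mul]
  by_cases hd : 2 ∣ n
  · obtain ⟨m, rfl⟩ := hd
    rw [if_pos ⟨m, rfl⟩]
    have hmem : ((m, m) : ℕ × ℕ) ∈ Finset.HasAntidiagonal.antidiagonal (2 * m) := by
      rw [Finset.HasAntidiagonal.mem_antidiagonal]; omega
    rw [← Finset.add_sum_erase _ _ hmem]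
    have : ∑ p ∈ (Finset.HasAntidiagonal.antidiagonal (2 * m)).erase (m, m),
        coeff p.1 G * coeff p.2 G = 0 := by
      apply Finset.sum_involution (fun p _ => (p.2, p.1))
      · intro p hp
        rw [mul_comm]
        exact CharTwo.add_self_eq_zero _
      · rintro ⟨a, b⟩ hp _ h
        rw [Finset.mem_erase, Finset.HasAntidiagonal.mem_antidiagonal] at hp
        simp only [Prod.mk.injEq, ne_eq] at hp h
        exact hp.1 ⟨by omega, by omega⟩
      · rintro ⟨a, b⟩ hp
        rw [Finset.mem_erase, Finset.HasAntidiagonal.mem_antidiagonal] at hp ⊢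
        simp only [Prod.mk.injEq, ne_eq] at hp ⊢
        exact ⟨fun h => hp.1 ⟨by omega, by omega⟩, by omega⟩
      · intro p hp; rfl
    rw [this, add_zero, sq, Nat.mul_div_cancel_left m (by norm_num : 0 < 2)]
  · rw [if_neg hd]
    apply Finset.sum_involution (fun p _ => (p.2, p.1))
    · intro p hp
      rw [mul_comm]
      exact CharTwo.add_self_eq_zero _
    · rintro ⟨a, b⟩ hp _ h
      rw [Finset.HasAntidiagonal.mem_antidiagonal] at hp
      simp only [Prod.mk.injEq] at h
      exact hd ⟨a, by omega⟩
    · intro p hp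
      rw [Finset.HasAntidiagonal.mem_antidiagonal] at hp ⊢
      omega
    · intro p hp; rfl

noncomputable def Amod : PowerSeries (ZMod 2) :=
  PowerSeries.map (Int.castRingHom (ZMod 2)) fZ

theorem coeff_zero_fZ : PowerSeries.coeff 0 fZ = 1 := by
  rw [fZ, coeff_mk, Finset.prod_range_one]
  simp

theorem coeff_zero_Amod : PowerSeries.coeff 0 Amod = 1 := by
  rw [Amod, PowerSeries.coeff_map, coeff_zero_fZ]
  simp

theorem coeff_Amod_two_pow (d : ℕ) : ∀ n, n < 2 ^ d →
    PowerSeries.coeff n (Amod ^ (2 ^ d)) = if n = 0 then 1 else 0 := by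
  induction d with
  | zero =>
    intro n hn
    interval_cases n
    rw [pow_zero, pow_one, if_pos rfl, coeff_zero_Amod]
  | succ d ih =>
    intro n hn
    rw [pow_succ, pow_mul, coeff_sq_char2]
    by_cases hd2 : 2 ∣ n
    · rw [if_pos hd2]
      have hlt : n / 2 < 2 ^ d := by
        rw [pow_succ] at hn; omega
      rw [ih _ hlt]
      by_cases h0 : n = 0
      · simp [h0]
      · have : ¬ (n / 2 = 0) := by omega
        simp [this, h0]
    · rw [if_neg hd2, if_neg (by rintro rfl; exact hd2 ⟨0, rfl⟩)]

theorem Qmod_mul_Amod :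
    PowerSeries.map (Int.castRingHom (ZMod 2)) Pgf * Amod = 1 := by
  rw [Amod, ← map_mul, Pgf_mul_fZ, map_one]

theorem coeff_match (d : ℕ) : ∀ n, n < 2 ^ d →
    PowerSeries.coeff n (Amod ^ (2 ^ d - 1)) =
      PowerSeries.coeff n (PowerSeries.map (Int.castRingHom (ZMod 2)) Pgf) := by
  intro n
  induction n using Nat.strong_induction_on with
  | _ n ih =>
    intro hn
    set Q := PowerSeries.map (Int.castRingHom (ZMod 2)) Pgf with hQ
    have hBA : PowerSeries.coeff n (Amod ^ (2 ^ d - 1) * Amod) =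
        if n = 0 then 1 else 0 := by
      rw [← pow_succ, Nat.sub_add_cancel (Nat.one_le_two_pow)]
      exact coeff_Amod_two_pow d n hn
    have hQA : PowerSeries.coeff n (Q * Amod) = if n = 0 then 1 else 0 := by
      rw [Qmod_mul_Amod, coeff_one]
    have hdiff : PowerSeries.coeff n ((Amod ^ (2 ^ d - 1) - Q) * Amod) = 0 := by
      rw [sub_mul, map_sub, hBA, hQA, sub_self]
    rw [coeff_mul, Finset.sum_eq_single ((n, 0) : ℕ × ℕ)] at hdiff
    · rw [map_sub] at hdiff
      have h0 : PowerSeries.coeff 0 Amod = 1 := coeff_zero_Amod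
      rw [h0, mul_one, sub_eq_zero] at hdiff
      exact hdiff
    · rintro ⟨a, b⟩ hab hne
      rw [Finset.HasAntidiagonal.mem_antidiagonal] at hab
      have ha : a < n := by
        rcases Nat.lt_or_ge a n with h | h
        · exact h
        · exfalso; apply hne
          simp only [Prod.mk.injEq]
          omega
      rw [map_sub, ih a ha (lt_trans ha hn), sub_self, zero_mul]
    · intro h
      exact absurd (Finset.HasAntidiagonal.mem_antidiagonal.mpr (by omega)) h

/-- For every `d ≥ 1`, the first `2^d` coefficients of `f_1^{2^d-1}` agree mod 2
with the partition numbers: `c_{2^d-1}(n) ≡ p(n) (mod 2)` for `0 ≤ n ≤ 2^d - 1`. -/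
theorem initial_segment_matches_partition (d : ℕ) (hd : 1 ≤ d) :
    ∀ n : ℕ, n ≤ 2 ^ d - 1 →
      c (2 ^ d - 1) n ≡ (Fintype.card (Nat.Partition n) : ℤ) [ZMOD 2] := by
  intro n hn
  have hpos : 0 < 2 ^ d := Nat.pow_pos (by norm_num)
  have hn' : n < 2 ^ d := by omega
  apply (ZMod.intCast_eq_intCast_iff _ _ 2).mp
  have lhs : ((c (2 ^ d - 1) n : ℤ) : ZMod 2) =
      PowerSeries.coeff n (Amod ^ (2 ^ d - 1)) := by
    rw [c, Amod, ← map_pow, PowerSeries.coeff_map]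
    rfl
  rw [lhs, coeff_match d n hn', PowerSeries.coeff_map, Pgf, coeff_mk]
  rfl
end
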